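/- arXiv:1204.3730 — 4 statements merged into one kernel-verified Lean document; each statement's English description precedes it below -/
import Mathlib

section
/- Consider the Robbins–Monro scheme θ_{n+1} = θ_n − γ_{n+1} H(θ_n, Y_{n+1}) with (θ,y) ↦ H(θ,y) uniformly Lipschitz with constant [H]₁, h(θ) = E[H(θ,Y)] continuously differentiable with ⟨Dh(θ)ξ, ξ⟩ ≥ λ̲|ξ|² for all θ, ξ, and i.i.d. innovations satisfying GC(α). Then for all N ≥ 1 and r ≥ 0, P(|θ_N − θ*| ≥ r + δ_N) ≤ exp(−r² / (α [H]₁² Π_N ∑_{k=1}^N γ_k²/Π_k)), where Π_N = ∏_{k=0}^{N−1}(1 − 2λ̲γ_{k+1} + [H]₁²γ_{k+1}²) and δ_N = E[|θ_N − θ*|]. -/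
open MeasureTheory Real ProbabilityTheory Filter
open scoped RealInnerProductSpace

noncomputable section RMaux

/-- Generic Chernoff bound from an mgf estimate. -/
lemma rm_chernoff_of_mgf {Ω : Type*} [MeasurableSpace Ω] (μ : Measure Ω) (g : Ω → ℝ)
    (hg : Measurable g) (A δ r : ℝ) (hA : 0 < A) (hr : 0 ≤ r)
    (hmgf : ∀ l : ℝ, 0 ≤ l → ∫⁻ ω, ENNReal.ofReal (Real.exp (l * g ω)) ∂μ ≤
      ENNReal.ofReal (Real.exp (l * δ + A * l ^ 2 / 4))) :
    μ {ω | δ + r ≤ g ω} ≤ ENNReal.ofReal (Real.exp (-r ^ 2 / A)) := by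
  set l : ℝ := 2 * r / A with hl
  have hl0 : 0 ≤ l := by positivity
  set ε : ENNReal := ENNReal.ofReal (Real.exp (l * (δ + r))) with hε
  have hε0 : ε ≠ 0 := (ENNReal.ofReal_pos.2 (Real.exp_pos _)).ne'
  have hεtop : ε ≠ ⊤ := ENNReal.ofReal_ne_top
  have hsub : {ω | δ + r ≤ g ω} ⊆
      {ω | ε ≤ ENNReal.ofReal (Real.exp (l * g ω))} := fun ω hω =>
    ENNReal.ofReal_le_ofReal (Real.exp_le_exp.2 (mul_le_mul_of_nonneg_left hω hl0))
  have key := mul_meas_ge_le_lintegral₀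
    (μ := μ) (f := fun ω => ENNReal.ofReal (Real.exp (l * g ω)))
    (((measurable_const.mul hg).exp).ennreal_ofReal).aemeasurable ε
  have h2 : μ {ω | ε ≤ ENNReal.ofReal (Real.exp (l * g ω))} ≤
      (∫⁻ ω, ENNReal.ofReal (Real.exp (l * g ω)) ∂μ) / ε := by
    rw [ENNReal.le_div_iff_mul_le (Or.inl hε0) (Or.inl hεtop)]
    rw [mul_comm]; exact key
  have hexp : l * δ + A * l ^ 2 / 4 - l * (δ + r) = -r ^ 2 / A := by
    rw [hl]; field_simp; ring
  calc μ {ω | δ + r ≤ g ω} ≤ μ {ω | ε ≤ ENNReal.ofReal (Real.exp (l * g ω))} :=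
        measure_mono hsub
    _ ≤ (∫⁻ ω, ENNReal.ofReal (Real.exp (l * g ω)) ∂μ) / ε := h2
    _ ≤ ENNReal.ofReal (Real.exp (l * δ + A * l ^ 2 / 4)) / ε :=
        ENNReal.div_le_div_right (hmgf l hl0) _
    _ = ENNReal.ofReal (Real.exp (l * δ + A * l ^ 2 / 4) / Real.exp (l * (δ + r))) :=
        (ENNReal.ofReal_div_of_pos (Real.exp_pos _)).symm
    _ = ENNReal.ofReal (Real.exp (-r ^ 2 / A)) := by rw [← Real.exp_sub, hexp]

section nu

variable {q : ℕ} (ν : Measure (EuclideanSpace ℝ (Fin q))) [IsProbabilityMeasure ν]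
  (α : ℝ) (hα : 0 < α)
  (hGC : ∀ f : EuclideanSpace ℝ (Fin q) → ℝ, LipschitzWith 1 f → ∀ l : ℝ, 0 ≤ l →
    ∫ y, Real.exp (l * f y) ∂ν ≤ Real.exp (l * ∫ y, f y ∂ν + α * l ^ 2 / 4))

include hα hGC in
lemma rm_exp_norm_integrable : ∀ c : ℝ,
    Integrable (fun y : EuclideanSpace ℝ (Fin q) => Real.exp (c * ‖y‖)) ν := by
  intro c
  have hmeasc : ∀ c' : ℝ, Measurable fun y : EuclideanSpace ℝ (Fin q) => Real.exp (c' * ‖y‖) :=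
    fun c' => (Real.continuous_exp.comp (continuous_const.mul continuous_norm)).measurable
  rcases le_or_gt c 0 with hc | hc
  · refine Integrable.mono' (integrable_const 1) (hmeasc c).aestronglyMeasurable
      (ae_of_all _ fun y => ?_)
    rw [Real.norm_eq_abs, abs_of_pos (Real.exp_pos _)]
    exact Real.exp_le_one_iff.2 (mul_nonpos_of_nonpos_of_nonneg hc (norm_nonneg y))
  -- main case : c > 0
  set fn : ℕ → EuclideanSpace ℝ (Fin q) → ℝ := fun n y => min ‖y‖ (n : ℝ) with hfn
  have hfnlip : ∀ n : ℕ, LipschitzWith 1 (fn n) := fun n =>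
    lipschitzWith_one_norm.min_const (n : ℝ)
  have hfn0 : ∀ n y, 0 ≤ fn n y := fun n y => le_min (norm_nonneg y) n.cast_nonneg
  have hfnle : ∀ n y, fn n y ≤ (n : ℝ) := fun n y => min_le_right _ _
  have hfnmeas : ∀ n : ℕ, Measurable (fn n) := fun n => (hfnlip n).continuous.measurable
  have hfnint : ∀ n : ℕ, Integrable (fn n) ν := fun n =>
    Integrable.mono' (integrable_const (n : ℝ)) (hfnmeas n).aestronglyMeasurable
      (ae_of_all _ fun y => by
        rw [Real.norm_eq_abs, abs_of_nonneg (hfn0 n y)]; exact hfnle n y)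
  have hfnexpint : ∀ (n : ℕ) (l : ℝ), Integrable (fun y => Real.exp (l * fn n y)) ν := by
    intro n l
    refine Integrable.mono' (integrable_const (Real.exp (|l| * n)))
      (Real.measurable_exp.comp (measurable_const.mul (hfnmeas n))).aestronglyMeasurable (ae_of_all _ fun y => ?_)
    rw [Real.norm_eq_abs, abs_of_pos (Real.exp_pos _)]
    refine Real.exp_le_exp.2 ?_
    calc l * fn n y ≤ |l * fn n y| := le_abs_self _
      _ = |l| * fn n y := by rw [abs_mul, abs_of_nonneg (hfn0 n y)]
      _ ≤ |l| * n := mul_le_mul_of_nonneg_left (hfnle n y) (abs_nonneg l)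
  set m : ℕ → ℝ := fun n => ∫ y, fn n y ∂ν with hm
  obtain ⟨R, hR⟩ : ∃ R : ℕ, ENNReal.ofReal (3 / 4) ≤ ν {y | ‖y‖ ≤ (R : ℝ)} := by
    have hmono : Monotone fun n : ℕ => {y : EuclideanSpace ℝ (Fin q) | ‖y‖ ≤ (n : ℝ)} :=
      fun a b hab y hy => by
        simp only [Set.mem_setOf_eq] at *
        exact le_trans hy (by exact_mod_cast hab)
    have hun : (⋃ n : ℕ, {y : EuclideanSpace ℝ (Fin q) | ‖y‖ ≤ (n : ℝ)}) = Set.univ :=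
      Set.eq_univ_of_forall fun y => by
        obtain ⟨n, hn⟩ := exists_nat_ge ‖y‖
        exact Set.mem_iUnion.2 ⟨n, hn⟩
    have htend := tendsto_measure_iUnion_atTop (μ := ν) hmono
    rw [hun, measure_univ] at htend
    exact (htend.eventually_const_le (ENNReal.ofReal_lt_one.2 (by norm_num))).exists
  set β : ℝ := Real.sqrt (α * Real.log 4) with hβdef
  have hβ : 0 ≤ β := Real.sqrt_nonneg _
  have hmle : ∀ n, m n ≤ (R : ℝ) + β := by
    intro n
    by_contra hcon
    push_neg at hcon
    set t : ℝ := m n - R with htdef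
    have hβt : β < t := by simp only [htdef]; linarith
    have ht0 : 0 ≤ t := le_trans hβ hβt.le
    have hmgf : ∀ l : ℝ, 0 ≤ l →
        ∫⁻ y, ENNReal.ofReal (Real.exp (l * (-(fn n y)))) ∂ν ≤
          ENNReal.ofReal (Real.exp (l * (-(m n)) + α * l ^ 2 / 4)) := by
      intro l hl
      rw [← ofReal_integral_eq_lintegral_ofReal
        (by simpa using hfnexpint n (-l)) (ae_of_all _ fun y => (Real.exp_pos _).le)]
      refine ENNReal.ofReal_le_ofReal ?_
      have := hGC (fun y => -(fn n y)) ((hfnlip n).neg) l hl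
      rw [integral_neg] at this
      simpa [mul_neg] using this
    have hcher := rm_chernoff_of_mgf ν (fun y => -(fn n y)) (hfnmeas n).neg
      α (-(m n)) t hα ht0 hmgf
    have hsub2 : {y : EuclideanSpace ℝ (Fin q) | ‖y‖ ≤ (R : ℝ)} ⊆
        {y | -(m n) + t ≤ -(fn n y)} := fun y hy => by
      have h1 : fn n y ≤ (R : ℝ) := le_trans (min_le_left _ _) hy
      have h3 : t = m n - (R : ℝ) := rfl
      show -(m n) + t ≤ -(fn n y)
      linarith
    have hfinal := le_trans hR (le_trans (measure_mono hsub2) hcher)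
    rw [ENNReal.ofReal_le_ofReal_iff (Real.exp_pos _).le] at hfinal
    have ht2 : α * Real.log 4 < t ^ 2 := by
      have hβ2 : β ^ 2 = α * Real.log 4 :=
        Real.sq_sqrt (mul_nonneg hα.le (Real.log_nonneg (by norm_num)))
      nlinarith
    have hlt : Real.exp (-t ^ 2 / α) < Real.exp (-Real.log 4) :=
      Real.exp_lt_exp.2 (by rw [neg_div, neg_lt_neg_iff, lt_div_iff₀ hα]; linarith)
    rw [Real.exp_neg, Real.exp_log (by norm_num : (0:ℝ) < 4)] at hlt
    linarith
  have hsup : ∀ y : EuclideanSpace ℝ (Fin q),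
      (⨆ n : ℕ, ENNReal.ofReal (Real.exp (c * fn n y))) = ENNReal.ofReal (Real.exp (c * ‖y‖)) := by
    intro y
    refine le_antisymm (iSup_le fun n => ENNReal.ofReal_le_ofReal (Real.exp_le_exp.2
      (mul_le_mul_of_nonneg_left (min_le_left _ _) hc.le))) ?_
    obtain ⟨n, hn⟩ := exists_nat_ge ‖y‖
    exact le_iSup_of_le n (le_of_eq (by rw [hfn]; simp [min_eq_left hn]))
  have hmonofn : Monotone fun (n : ℕ) (y : EuclideanSpace ℝ (Fin q)) =>
      ENNReal.ofReal (Real.exp (c * fn n y)) := by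
    intro a b hab
    intro y
    refine ENNReal.ofReal_le_ofReal (Real.exp_le_exp.2 (mul_le_mul_of_nonneg_left ?_ hc.le))
    exact min_le_min le_rfl (by exact_mod_cast hab)
  have hlint : ∫⁻ y, ENNReal.ofReal (Real.exp (c * ‖y‖)) ∂ν ≤
      ENNReal.ofReal (Real.exp (c * ((R : ℝ) + β) + α * c ^ 2 / 4)) := by
    have hmeasn : ∀ n : ℕ, Measurable fun y : EuclideanSpace ℝ (Fin q) =>
        ENNReal.ofReal (Real.exp (c * fn n y)) := fun n =>
      Measurable.ennreal_ofReal (Real.measurable_exp.comp (measurable_const.mul (hfnmeas n)))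
    have h1 : ∫⁻ y, ENNReal.ofReal (Real.exp (c * ‖y‖)) ∂ν =
        ⨆ n : ℕ, ∫⁻ y, ENNReal.ofReal (Real.exp (c * fn n y)) ∂ν :=
      (lintegral_congr fun y => (hsup y).symm).trans (lintegral_iSup hmeasn hmonofn)
    rw [h1]
    refine iSup_le fun n => ?_
    rw [← ofReal_integral_eq_lintegral_ofReal (hfnexpint n c)
      (ae_of_all _ fun y => (Real.exp_pos _).le)]
    refine ENNReal.ofReal_le_ofReal (le_trans (hGC (fn n) (hfnlip n) c hc.le) ?_)
    refine Real.exp_le_exp.2 (add_le_add_left (mul_le_mul_of_nonneg_left (hmle n) hc.le) _)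
  refine ⟨(hmeasc c).aestronglyMeasurable, ?_⟩
  rw [hasFiniteIntegral_iff_ofReal (ae_of_all _ fun y => (Real.exp_pos _).le)]
  exact lt_of_le_of_lt hlint ENNReal.ofReal_lt_top

include hα hGC in
lemma rm_norm_integrable : Integrable (fun y : EuclideanSpace ℝ (Fin q) => ‖y‖) ν := by
  refine Integrable.mono' (rm_exp_norm_integrable ν α hα hGC 1)
    continuous_norm.aestronglyMeasurable (ae_of_all _ fun y => ?_)
  rw [Real.norm_eq_abs, abs_of_nonneg (norm_nonneg y), one_mul]
  linarith [Real.add_one_le_exp ‖y‖]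

include hα hGC in
lemma rm_lip_integrable (f : EuclideanSpace ℝ (Fin q) → ℝ) (c : ℝ) (hc : 0 ≤ c)
    (hf : ∀ y y', |f y - f y'| ≤ c * ‖y - y'‖) :
    Integrable f ν ∧ ∀ l : ℝ, Integrable (fun y => Real.exp (l * f y)) ν := by
  have hlip : LipschitzWith (Real.toNNReal c) f := by
    refine LipschitzWith.of_dist_le_mul fun y y' => ?_
    rw [Real.dist_eq, dist_eq_norm]
    exact le_trans (hf y y') (mul_le_mul_of_nonneg_right (Real.le_coe_toNNReal c) (norm_nonneg _))
  have hcont : Continuous f := hlip.continuous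
  have hbound : ∀ y, |f y| ≤ |f 0| + c * ‖y‖ := fun y => by
    have := hf y 0
    rw [sub_zero] at this
    calc |f y| = |f 0 + (f y - f 0)| := by ring_nf
      _ ≤ |f 0| + |f y - f 0| := abs_add_le _ _
      _ ≤ |f 0| + c * ‖y‖ := by linarith
  constructor
  · refine Integrable.mono' ((integrable_const |f 0|).add
      ((rm_norm_integrable ν α hα hGC).const_mul c)) hcont.aestronglyMeasurable
      (ae_of_all _ fun y => ?_)
    simpa [Real.norm_eq_abs] using hbound y
  · intro l
    refine Integrable.mono'
      (((rm_exp_norm_integrable ν α hα hGC (|l| * c)).const_mul (Real.exp (|l| * |f 0|))))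
      (Real.measurable_exp.comp (measurable_const.mul hcont.measurable)).aestronglyMeasurable
      (ae_of_all _ fun y => ?_)
    rw [Real.norm_eq_abs, abs_of_pos (Real.exp_pos _), ← Real.exp_add]
    refine Real.exp_le_exp.2 ?_
    calc l * f y ≤ |l| * |f y| := by
          calc l * f y ≤ |l * f y| := le_abs_self _
            _ = |l| * |f y| := abs_mul _ _
      _ ≤ |l| * (|f 0| + c * ‖y‖) := mul_le_mul_of_nonneg_left (hbound y) (abs_nonneg l)
      _ = |l| * |f 0| + |l| * c * ‖y‖ := by ring
  
include hα hGC in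
lemma rm_gc_scaled (f : EuclideanSpace ℝ (Fin q) → ℝ) (c : ℝ) (hc : 0 ≤ c)
    (hf : ∀ y y', |f y - f y'| ≤ c * ‖y - y'‖) (l : ℝ) (hl : 0 ≤ l) :
    ∫ y, Real.exp (l * f y) ∂ν ≤ Real.exp (l * ∫ y, f y ∂ν + α * l ^ 2 * c ^ 2 / 4) := by
  rcases eq_or_lt_of_le hc with hc0 | hcpos
  · have hconst : ∀ y, f y = f 0 := fun y => by
      have := hf y 0
      rw [← hc0, zero_mul] at this
      have h2 := abs_nonneg (f y - f 0)
      have : f y - f 0 = 0 := le_antisymm (le_trans (le_abs_self _) this)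
        (by nlinarith [neg_abs_le (f y - f 0)])
      linarith
    have h1 : ∫ y, Real.exp (l * f y) ∂ν = Real.exp (l * f 0) :=
      (integral_congr_ae (g := fun _ => Real.exp (l * f 0))
        (ae_of_all _ fun y => by rw [hconst y])).trans (by simp)
    have h3 : ∫ y, f y ∂ν = f 0 :=
      (integral_congr_ae (g := fun _ => f 0) (ae_of_all _ hconst)).trans (by simp)
    rw [h1, h3]
    exact Real.exp_le_exp.2 (le_add_of_nonneg_right (by positivity))
  · set g : EuclideanSpace ℝ (Fin q) → ℝ := fun y => f y / c with hg
    have hglip : LipschitzWith 1 g := by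
      refine LipschitzWith.of_dist_le_mul fun y y' => ?_
      rw [Real.dist_eq, dist_eq_norm, NNReal.coe_one, one_mul, hg]
      rw [div_sub_div_same, abs_div, abs_of_pos hcpos, div_le_iff₀ hcpos, mul_comm]
      exact hf y y'
    have := hGC g hglip (l * c) (mul_nonneg hl hc)
    have he1 : ∀ y, l * c * g y = l * f y := fun y => by
      show l * c * (f y / c) = l * f y
      field_simp
    have he2 : ∫ y, g y ∂ν = (∫ y, f y ∂ν) / c := integral_div c f
    rw [he2] at this
    simp_rw [he1] at this
    refine le_trans this (Real.exp_le_exp.2 (le_of_eq ?_))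
    field_simp

end nu

lemma rm_strong_mono {d : ℕ} (h : EuclideanSpace ℝ (Fin d) → EuclideanSpace ℝ (Fin d))
    (hC1 : ContDiff ℝ 1 h) (lam : ℝ)
    (hattract : ∀ θ' ξ, lam * ‖ξ‖ ^ 2 ≤ ⟪fderiv ℝ h θ' ξ, ξ⟫)
    (a b : EuclideanSpace ℝ (Fin d)) :
    lam * ‖a - b‖ ^ 2 ≤ ⟪h a - h b, a - b⟫ := by
  set v := a - b with hv
  have hdiff : Differentiable ℝ h := hC1.differentiable one_ne_zero
  have hcurve : ∀ t : ℝ, HasDerivAt (fun t : ℝ => b + t • v) v t := by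
    intro t
    simpa using ((hasDerivAt_id t).smul_const v).const_add b
  set φ : ℝ → ℝ := fun t => ⟪h (b + t • v), v⟫ with hφdef
  have hφ : ∀ t : ℝ, HasDerivAt φ ⟪fderiv ℝ h (b + t • v) v, v⟫ t := by
    intro t
    have h1 : HasDerivAt (fun t : ℝ => h (b + t • v)) (fderiv ℝ h (b + t • v) v) t :=
      (hdiff (b + t • v)).hasFDerivAt.comp_hasDerivAt t (hcurve t)
    have h2 := HasDerivAt.inner ℝ h1 (hasDerivAt_const t v)
    simpa using h2
  set ψ : ℝ → ℝ := fun t => φ t - t * (lam * ‖v‖ ^ 2) with hψdef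
  have hψ : ∀ t : ℝ, HasDerivAt ψ (⟪fderiv ℝ h (b + t • v) v, v⟫ - lam * ‖v‖ ^ 2) t :=
    fun t => (hφ t).sub (hasDerivAt_mul_const (lam * ‖v‖ ^ 2))
  have hmono : Monotone ψ := by
    refine monotone_of_deriv_nonneg (fun t => (hψ t).differentiableAt) fun t => ?_
    rw [(hψ t).deriv]
    have := hattract (b + t • v) v
    linarith
  have h01 := hmono zero_le_one
  have hba : b + (1:ℝ) • v = a := by rw [one_smul, hv]; abel
  have hbb : b + (0:ℝ) • v = b := by rw [zero_smul, add_zero]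
  have hφ1 : φ 1 = ⟪h a, v⟫ := by
    show ⟪h (b + (1:ℝ) • v), v⟫ = ⟪h a, v⟫
    rw [hba]
  have hφ0 : φ 0 = ⟪h b, v⟫ := by
    show ⟪h (b + (0:ℝ) • v), v⟫ = ⟪h b, v⟫
    rw [hbb]
  have hsub : ⟪h a - h b, v⟫ = φ 1 - φ 0 := by rw [hφ1, hφ0, inner_sub_left]
  have h01' : φ 0 - 0 * (lam * ‖v‖ ^ 2) ≤ φ 1 - 1 * (lam * ‖v‖ ^ 2) := h01
  rw [hsub]
  linarith

lemma rm_contraction {d q : ℕ} (ν : Measure (EuclideanSpace ℝ (Fin q)))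
    [IsProbabilityMeasure ν]
    (H : EuclideanSpace ℝ (Fin d) → EuclideanSpace ℝ (Fin q) → EuclideanSpace ℝ (Fin d))
    (KH : ℝ)
    (hHθ : ∀ e a b, ‖H a e - H b e‖ ≤ KH * ‖a - b‖)
    (hHcont : Continuous fun p : (EuclideanSpace ℝ (Fin d)) × (EuclideanSpace ℝ (Fin q)) =>
      H p.1 p.2)
    (hHint : ∀ x, Integrable (fun e => H x e) ν)
    (h : EuclideanSpace ℝ (Fin d) → EuclideanSpace ℝ (Fin d))
    (hdefν : ∀ x, h x = ∫ e, H x e ∂ν)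
    (lam : ℝ) (hmono : ∀ a b, lam * ‖a - b‖ ^ 2 ≤ ⟪h a - h b, a - b⟫)
    (γ : ℝ) (hγ : 0 ≤ γ) (a b : EuclideanSpace ℝ (Fin d)) :
    ∫ e, ‖(a - γ • H a e) - (b - γ • H b e)‖ ^ 2 ∂ν ≤
      (1 - 2 * lam * γ + KH ^ 2 * γ ^ 2) * ‖a - b‖ ^ 2 := by
  set v := a - b with hv
  set Δ : EuclideanSpace ℝ (Fin q) → EuclideanSpace ℝ (Fin d) := fun e => H a e - H b e with hΔ
  have hHacont : ∀ x : EuclideanSpace ℝ (Fin d), Continuous fun e => H x e := fun x =>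
    hHcont.comp (continuous_const.prodMk continuous_id)
  have hΔcont : Continuous Δ := (hHacont a).sub (hHacont b)
  have hΔbdd : ∀ e, ‖Δ e‖ ≤ KH * ‖v‖ := fun e => hHθ e a b
  have hpoint : ∀ e, ‖(a - γ • H a e) - (b - γ • H b e)‖ ^ 2 =
      ‖v‖ ^ 2 - 2 * γ * ⟪v, Δ e⟫ + γ ^ 2 * ‖Δ e‖ ^ 2 := by
    intro e
    have heq : (a - γ • H a e) - (b - γ • H b e) = v - γ • Δ e := by
      rw [hv, hΔ, smul_sub]
      abel
    rw [heq, norm_sub_sq_real, real_inner_smul_right, norm_smul]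
    rw [Real.norm_eq_abs, mul_pow, sq_abs]
    ring
  have hint1 : Integrable (fun e => ⟪v, Δ e⟫) ν := by
    refine Integrable.mono' (integrable_const (‖v‖ * (KH * ‖v‖)))
      (continuous_const.inner hΔcont).aestronglyMeasurable (ae_of_all _ fun e => ?_)
    rw [Real.norm_eq_abs]
    exact le_trans (abs_real_inner_le_norm v (Δ e))
      (mul_le_mul_of_nonneg_left (hΔbdd e) (norm_nonneg v))
  have hint2 : Integrable (fun e => ‖Δ e‖ ^ 2) ν := by
    refine Integrable.mono' (integrable_const ((KH * ‖v‖) ^ 2))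
      ((hΔcont.norm.pow 2)).aestronglyMeasurable (ae_of_all _ fun e => ?_)
    rw [Real.norm_eq_abs, abs_of_nonneg (by positivity)]
    exact pow_le_pow_left₀ (norm_nonneg _) (hΔbdd e) 2
  have hIΔ : Integrable Δ ν := (hHint a).sub (hHint b)
  have hinner : ∫ e, ⟪v, Δ e⟫ ∂ν = ⟪v, h a - h b⟫ := by
    rw [integral_inner hIΔ v]
    congr 1
    rw [hΔ, integral_sub (hHint a) (hHint b), hdefν, hdefν]
  have hsq : ∫ e, ‖Δ e‖ ^ 2 ∂ν ≤ KH ^ 2 * ‖v‖ ^ 2 := by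
    have h1 := integral_mono hint2 (integrable_const ((KH * ‖v‖) ^ 2))
      (fun e => pow_le_pow_left₀ (norm_nonneg _) (hΔbdd e) 2)
    have h2 : ∫ _ : EuclideanSpace ℝ (Fin q), (KH * ‖v‖) ^ 2 ∂ν = (KH * ‖v‖) ^ 2 := by
      simp [integral_const]
    rw [h2] at h1
    calc ∫ e, ‖Δ e‖ ^ 2 ∂ν ≤ (KH * ‖v‖) ^ 2 := h1
      _ = KH ^ 2 * ‖v‖ ^ 2 := by ring
  have hsplit : ∫ e, ‖(a - γ • H a e) - (b - γ • H b e)‖ ^ 2 ∂ν =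
      ‖v‖ ^ 2 - 2 * γ * ∫ e, ⟪v, Δ e⟫ ∂ν + γ ^ 2 * ∫ e, ‖Δ e‖ ^ 2 ∂ν := by
    have hA : Integrable (fun e => ‖v‖ ^ 2 - 2 * γ * ⟪v, Δ e⟫) ν :=
      (integrable_const _).sub (hint1.const_mul _)
    have hB : Integrable (fun e => γ ^ 2 * ‖Δ e‖ ^ 2) ν := hint2.const_mul _
    have e1 : ∫ e, (‖v‖ ^ 2 - 2 * γ * ⟪v, Δ e⟫ + γ ^ 2 * ‖Δ e‖ ^ 2) ∂ν
        = (∫ e, (‖v‖ ^ 2 - 2 * γ * ⟪v, Δ e⟫) ∂ν) + ∫ e, γ ^ 2 * ‖Δ e‖ ^ 2 ∂ν :=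
      integral_add hA hB
    have e2 : ∫ e, (‖v‖ ^ 2 - 2 * γ * ⟪v, Δ e⟫) ∂ν
        = (∫ _ : EuclideanSpace ℝ (Fin q), ‖v‖ ^ 2 ∂ν) - ∫ e, 2 * γ * ⟪v, Δ e⟫ ∂ν :=
      integral_sub (integrable_const _) (hint1.const_mul _)
    have e3 : ∫ e, 2 * γ * ⟪v, Δ e⟫ ∂ν = 2 * γ * ∫ e, ⟪v, Δ e⟫ ∂ν := integral_const_mul _ _
    have e4 : ∫ e, γ ^ 2 * ‖Δ e‖ ^ 2 ∂ν = γ ^ 2 * ∫ e, ‖Δ e‖ ^ 2 ∂ν := integral_const_mul _ _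
    have e5 : ∫ _ : EuclideanSpace ℝ (Fin q), ‖v‖ ^ 2 ∂ν = ‖v‖ ^ 2 := by simp [integral_const]
    rw [integral_congr_ae (ae_of_all _ hpoint), e1, e2, e3, e4, e5]
  rw [hsplit, hinner]
  have hm := hmono a b
  rw [real_inner_comm] at hm
  nlinarith [mul_le_mul_of_nonneg_left hm (by linarith : (0:ℝ) ≤ 2 * γ),
    mul_le_mul_of_nonneg_left hsq (sq_nonneg γ)]

lemma rm_fac_nonneg (lam KH : ℝ) (hlam : 0 < lam) (hlamK : lam ≤ KH) (t : ℝ) :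
    0 ≤ 1 - 2 * lam * t + KH ^ 2 * t ^ 2 := by
  rcases le_or_gt 0 t with ht | ht
  · nlinarith [sq_nonneg (1 - KH * t)]
  · nlinarith [sq_nonneg (KH * t)]

/-- Cauchy–Schwarz for probability measures, special case. -/
lemma rm_cs {q : ℕ} (ν : Measure (EuclideanSpace ℝ (Fin q))) [IsProbabilityMeasure ν]
    (g : EuclideanSpace ℝ (Fin q) → ℝ) (hg1 : Integrable g ν)
    (hg2 : Integrable (fun e => g e ^ 2) ν) :
    ∫ e, |g e| ∂ν ≤ Real.sqrt (∫ e, g e ^ 2 ∂ν) := by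
  set m := ∫ e, |g e| ∂ν with hm
  have hm0 : 0 ≤ m := integral_nonneg fun e => abs_nonneg _
  have hpt : ∀ e, (|g e| - m) ^ 2 = g e ^ 2 - 2 * m * |g e| + m ^ 2 := fun e => by
    rw [sub_sq, sq_abs]
    ring
  have hA : Integrable (fun e => g e ^ 2 - 2 * m * |g e|) ν := hg2.sub (hg1.abs.const_mul _)
  have e1 : ∫ e, (g e ^ 2 - 2 * m * |g e| + m ^ 2) ∂ν
      = (∫ e, (g e ^ 2 - 2 * m * |g e|) ∂ν) + ∫ _ : EuclideanSpace ℝ (Fin q), m ^ 2 ∂ν :=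
    integral_add hA (integrable_const _)
  have e2 : ∫ e, (g e ^ 2 - 2 * m * |g e|) ∂ν
      = (∫ e, g e ^ 2 ∂ν) - ∫ e, 2 * m * |g e| ∂ν := integral_sub hg2 (hg1.abs.const_mul _)
  have e3 : ∫ e, 2 * m * |g e| ∂ν = 2 * m * ∫ e, |g e| ∂ν := integral_const_mul _ _
  have e5 : ∫ _ : EuclideanSpace ℝ (Fin q), m ^ 2 ∂ν = m ^ 2 := by simp [integral_const]
  have hnn : 0 ≤ ∫ e, (|g e| - m) ^ 2 ∂ν := integral_nonneg fun e => sq_nonneg _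
  rw [integral_congr_ae (ae_of_all _ hpt), e1, e2, e3, e5, ← hm] at hnn
  have hsq : m ^ 2 ≤ ∫ e, g e ^ 2 ∂ν := by nlinarith
  exact (Real.le_sqrt hm0 (le_trans (sq_nonneg m) hsq)).2 hsq

/-- Continuity from a real Lipschitz bound. -/
lemma rm_cont_of_lip {X : Type*} [NormedAddCommGroup X] (f : X → ℝ) (c : ℝ)
    (hf : ∀ y y', |f y - f y'| ≤ c * ‖y - y'‖) : Continuous f := by
  have : LipschitzWith (Real.toNNReal c) f := by
    refine LipschitzWith.of_dist_le_mul fun y y' => ?_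
    rw [Real.dist_eq, dist_eq_norm]
    exact le_trans (hf y y') (mul_le_mul_of_nonneg_right (Real.le_coe_toNNReal c) (norm_nonneg _))
  exact this.continuous

/-- The backward value functions of the Robbins–Monro scheme. -/
noncomputable def rmU {d q : ℕ} (ν : Measure (EuclideanSpace ℝ (Fin q)))
    (H : EuclideanSpace ℝ (Fin d) → EuclideanSpace ℝ (Fin q) → EuclideanSpace ℝ (Fin d))
    (γ : ℕ → ℝ) (θstar : EuclideanSpace ℝ (Fin d)) (N : ℕ) :
    ℕ → EuclideanSpace ℝ (Fin d) → ℝ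
  | 0 => fun x => ‖x - θstar‖
  | (m + 1) => fun x => ∫ e, rmU ν H γ θstar N m (x - γ (N - m) • H x e) ∂ν

lemma rmU_nonneg {d q : ℕ} (ν : Measure (EuclideanSpace ℝ (Fin q)))
    (H : EuclideanSpace ℝ (Fin d) → EuclideanSpace ℝ (Fin q) → EuclideanSpace ℝ (Fin d))
    (γ : ℕ → ℝ) (θstar : EuclideanSpace ℝ (Fin d)) (N : ℕ) :
    ∀ m x, 0 ≤ rmU ν H γ θstar N m x := by
  intro m
  induction m with
  | zero => exact fun x => norm_nonneg _
  | succ m ih => exact fun x => integral_nonneg fun e => ih _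

section main

variable {d q : ℕ} (ν : Measure (EuclideanSpace ℝ (Fin q))) [IsProbabilityMeasure ν]
  (α : ℝ) (hα : 0 < α)
  (hGC : ∀ f : EuclideanSpace ℝ (Fin q) → ℝ, LipschitzWith 1 f → ∀ l : ℝ, 0 ≤ l →
    ∫ y, Real.exp (l * f y) ∂ν ≤ Real.exp (l * ∫ y, f y ∂ν + α * l ^ 2 / 4))
  (H : EuclideanSpace ℝ (Fin d) → EuclideanSpace ℝ (Fin q) → EuclideanSpace ℝ (Fin d))
  (KH : ℝ) (hKH : 0 < KH)
  (hHθ : ∀ e a b, ‖H a e - H b e‖ ≤ KH * ‖a - b‖)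
  (hHy : ∀ x e e', ‖H x e - H x e'‖ ≤ KH * ‖e - e'‖)
  (hHcont : Continuous fun p : (EuclideanSpace ℝ (Fin d)) × (EuclideanSpace ℝ (Fin q)) =>
    H p.1 p.2)
  (hHint : ∀ x, Integrable (fun e => H x e) ν)
  (h : EuclideanSpace ℝ (Fin d) → EuclideanSpace ℝ (Fin d))
  (hdefν : ∀ x, h x = ∫ e, H x e ∂ν)
  (lam : ℝ) (hlam : 0 < lam) (hlamK : lam ≤ KH)
  (hmono : ∀ a b, lam * ‖a - b‖ ^ 2 ≤ ⟪h a - h b, a - b⟫)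
  (γ : ℕ → ℝ) (hγpos : ∀ n, 1 ≤ n → 0 < γ n)
  (θstar : EuclideanSpace ℝ (Fin d)) (N : ℕ)

/-- squared Lipschitz constant of `rmU m`. -/
noncomputable def rmLsq (KH lam : ℝ) (γ : ℕ → ℝ) (N m : ℕ) : ℝ :=
  ∏ j ∈ Finset.range m, (1 - 2 * lam * γ (N - j) + KH ^ 2 * γ (N - j) ^ 2)

include hlam hlamK in
lemma rmLsq_nonneg : ∀ m, 0 ≤ rmLsq KH lam γ N m := fun m =>
  Finset.prod_nonneg fun j _ => rm_fac_nonneg lam KH hlam hlamK _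

include hα hGC hKH hHθ hHy hHcont hHint hdefν hlam hlamK hmono hγpos in
lemma rmU_lip : ∀ m, m ≤ N → ∀ x x',
    |rmU ν H γ θstar N m x - rmU ν H γ θstar N m x'| ≤
      Real.sqrt (rmLsq KH lam γ N m) * ‖x - x'‖ := by
  intro m
  induction m with
  | zero =>
    intro _ x x'
    simp only [rmU, rmLsq, Finset.range_zero, Finset.prod_empty, Real.sqrt_one, one_mul]
    calc |‖x - θstar‖ - ‖x' - θstar‖| ≤ ‖(x - θstar) - (x' - θstar)‖ := abs_norm_sub_norm_le _ _
      _ = ‖x - x'‖ := by congr 1; abel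
  | succ m ih =>
    intro hmN x x'
    have hmN' : m ≤ N := le_trans (Nat.le_succ m) hmN
    have ihm := ih hmN'
    set γm : ℝ := γ (N - m) with hγm
    have hγm0 : 0 < γm := hγpos _ (by omega)
    set L : ℝ := Real.sqrt (rmLsq KH lam γ N m) with hL
    have hL0 : 0 ≤ L := Real.sqrt_nonneg _
    set U : EuclideanSpace ℝ (Fin d) → ℝ := rmU ν H γ θstar N m with hU
    set Φ : EuclideanSpace ℝ (Fin d) → EuclideanSpace ℝ (Fin q) → EuclideanSpace ℝ (Fin d) :=
      fun z e => z - γm • H z e with hΦ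
    have hUcont : Continuous U := rm_cont_of_lip U L ihm
    have hΦcont : ∀ z, Continuous (Φ z) := fun z =>
      continuous_const.sub ((hHcont.comp (continuous_const.prodMk continuous_id)).const_smul γm)
    have hΦdiff : ∀ e, ‖Φ x e - Φ x' e‖ ≤ (1 + γm * KH) * ‖x - x'‖ := by
      intro e
      have heq : Φ x e - Φ x' e = (x - x') - γm • (H x e - H x' e) := by
        simp only [hΦ, smul_sub]
        abel
      rw [heq]
      calc ‖(x - x') - γm • (H x e - H x' e)‖ ≤ ‖x - x'‖ + ‖γm • (H x e - H x' e)‖ :=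
            norm_sub_le _ _
        _ ≤ ‖x - x'‖ + γm * (KH * ‖x - x'‖) := by
            rw [norm_smul, Real.norm_eq_abs, abs_of_pos hγm0]
            exact add_le_add_right (mul_le_mul_of_nonneg_left (hHθ e x x') hγm0.le) _
        _ = (1 + γm * KH) * ‖x - x'‖ := by ring
    set g : EuclideanSpace ℝ (Fin q) → ℝ := fun e => U (Φ x e) - U (Φ x' e) with hg
    have hgcont : Continuous g := (hUcont.comp (hΦcont x)).sub (hUcont.comp (hΦcont x'))
    have hgbd : ∀ e, |g e| ≤ L * ‖Φ x e - Φ x' e‖ := fun e => ihm _ _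
    have hgbd2 : ∀ e, |g e| ≤ L * ((1 + γm * KH) * ‖x - x'‖) := fun e =>
      le_trans (hgbd e) (mul_le_mul_of_nonneg_left (hΦdiff e) hL0)
    have hgint : Integrable g ν := by
      refine Integrable.mono' (integrable_const (L * ((1 + γm * KH) * ‖x - x'‖)))
        hgcont.aestronglyMeasurable (ae_of_all _ fun e => ?_)
      rw [Real.norm_eq_abs]
      exact hgbd2 e
    have hgsqint : Integrable (fun e => g e ^ 2) ν := by
      refine Integrable.mono' (integrable_const ((L * ((1 + γm * KH) * ‖x - x'‖)) ^ 2))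
        ((hgcont.pow 2)).aestronglyMeasurable (ae_of_all _ fun e => ?_)
      rw [Real.norm_eq_abs, abs_of_nonneg (sq_nonneg _), ← sq_abs]
      exact pow_le_pow_left₀ (abs_nonneg _) (hgbd2 e) 2
    have hΦsqint : Integrable (fun e => ‖Φ x e - Φ x' e‖ ^ 2) ν := by
      refine Integrable.mono' (integrable_const (((1 + γm * KH) * ‖x - x'‖) ^ 2))
        ((((hΦcont x).sub (hΦcont x')).norm.pow 2)).aestronglyMeasurable
        (ae_of_all _ fun e => ?_)
      rw [Real.norm_eq_abs, abs_of_nonneg (sq_nonneg _)]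
      exact pow_le_pow_left₀ (norm_nonneg _) (hΦdiff e) 2
    have hUint : ∀ z, Integrable (fun e => U (Φ z e)) ν := by
      intro z
      refine (rm_lip_integrable ν α hα hGC (fun e => U (Φ z e)) (L * (γm * KH))
        (by positivity) ?_).1
      intro e e'
      have heq : Φ z e - Φ z e' = γm • (H z e' - H z e) := by
        simp only [hΦ]
        rw [smul_sub]
        abel
      have hn : ‖Φ z e - Φ z e'‖ ≤ γm * KH * ‖e - e'‖ := by
        rw [heq, norm_smul, Real.norm_eq_abs, abs_of_pos hγm0, mul_assoc]
        refine mul_le_mul_of_nonneg_left ?_ hγm0.le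
        rw [norm_sub_rev]
        exact hHy z e e'
      calc |U (Φ z e) - U (Φ z e')| ≤ L * ‖Φ z e - Φ z e'‖ := ihm _ _
        _ ≤ L * (γm * KH * ‖e - e'‖) := mul_le_mul_of_nonneg_left hn hL0
        _ = L * (γm * KH) * ‖e - e'‖ := by ring
    -- main estimate
    have hstep : rmU ν H γ θstar N (m+1) x - rmU ν H γ θstar N (m+1) x' = ∫ e, g e ∂ν := by
      show (∫ e, U (Φ x e) ∂ν) - (∫ e, U (Φ x' e) ∂ν) = ∫ e, g e ∂ν
      rw [← integral_sub (hUint x) (hUint x')]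
    have hcs : |∫ e, g e ∂ν| ≤ Real.sqrt (∫ e, g e ^ 2 ∂ν) := by
      have h1 : |∫ e, g e ∂ν| ≤ ∫ e, |g e| ∂ν := by
        simpa [Real.norm_eq_abs] using norm_integral_le_integral_norm g (μ := ν)
      exact le_trans h1 (rm_cs ν g hgint hgsqint)
    have hgsq : ∫ e, g e ^ 2 ∂ν ≤ rmLsq KH lam γ N m *
        ((1 - 2 * lam * γm + KH ^ 2 * γm ^ 2) * ‖x - x'‖ ^ 2) := by
      have h1 : ∫ e, g e ^ 2 ∂ν ≤ ∫ e, rmLsq KH lam γ N m * ‖Φ x e - Φ x' e‖ ^ 2 ∂ν := by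
        refine integral_mono hgsqint (hΦsqint.const_mul _) fun e => ?_
        have := hgbd e
        calc g e ^ 2 = |g e| ^ 2 := (sq_abs _).symm
          _ ≤ (L * ‖Φ x e - Φ x' e‖) ^ 2 := pow_le_pow_left₀ (abs_nonneg _) (hgbd e) 2
          _ = rmLsq KH lam γ N m * ‖Φ x e - Φ x' e‖ ^ 2 := by
              rw [mul_pow, hL, Real.sq_sqrt (rmLsq_nonneg KH lam hlam hlamK γ N m)]
      have h2 : ∫ e, rmLsq KH lam γ N m * ‖Φ x e - Φ x' e‖ ^ 2 ∂ν =
          rmLsq KH lam γ N m * ∫ e, ‖Φ x e - Φ x' e‖ ^ 2 ∂ν := integral_const_mul _ _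
      have h3 := rm_contraction ν H KH hHθ hHcont hHint h hdefν lam hmono γm hγm0.le x x'
      refine le_trans h1 (le_trans (le_of_eq h2) ?_)
      exact mul_le_mul_of_nonneg_left h3 (rmLsq_nonneg KH lam hlam hlamK γ N m)
    have hfin : |rmU ν H γ θstar N (m+1) x - rmU ν H γ θstar N (m+1) x'| ≤
        Real.sqrt (rmLsq KH lam γ N m * ((1 - 2 * lam * γm + KH ^ 2 * γm ^ 2) * ‖x - x'‖ ^ 2)) := by
      rw [hstep]
      refine le_trans hcs (Real.sqrt_le_sqrt ?_)
      exact hgsq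
    refine le_trans hfin (le_of_eq ?_)
    have hfac0 : 0 ≤ 1 - 2 * lam * γm + KH ^ 2 * γm ^ 2 := rm_fac_nonneg lam KH hlam hlamK γm
    rw [Real.sqrt_mul (rmLsq_nonneg KH lam hlam hlamK γ N m), Real.sqrt_mul hfac0,
      Real.sqrt_sq (norm_nonneg _)]
    have hLsqsucc : rmLsq KH lam γ N (m+1) =
        rmLsq KH lam γ N m * (1 - 2 * lam * γm + KH ^ 2 * γm ^ 2) := by
      rw [rmLsq, Finset.prod_range_succ]
      rfl
    rw [hLsqsucc, Real.sqrt_mul (rmLsq_nonneg KH lam hlam hlamK γ N m)]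
    ring

include hα hGC hKH hHθ hHy hHcont hHint hdefν hlam hlamK hmono hγpos in
lemma rmU_comp_lip : ∀ m, m + 1 ≤ N → ∀ x e e',
    |rmU ν H γ θstar N m (x - γ (N - m) • H x e) -
      rmU ν H γ θstar N m (x - γ (N - m) • H x e')| ≤
      (Real.sqrt (rmLsq KH lam γ N m) * (γ (N - m) * KH)) * ‖e - e'‖ := by
  intro m hm x e e'
  have hγm0 : 0 < γ (N - m) := hγpos _ (by omega)
  set γm := γ (N - m) with hγmdef
  have hlipU := rmU_lip ν α hα hGC H KH hKH hHθ hHy hHcont hHint h hdefν lam hlam hlamK hmono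
    γ hγpos θstar N m (by omega)
  have heq : (x - γm • H x e) - (x - γm • H x e') = γm • (H x e' - H x e) := by
    rw [smul_sub]
    abel
  have hn : ‖(x - γm • H x e) - (x - γm • H x e')‖ ≤ γm * KH * ‖e - e'‖ := by
    rw [heq, norm_smul, Real.norm_eq_abs, abs_of_pos hγm0, mul_assoc]
    refine mul_le_mul_of_nonneg_left ?_ hγm0.le
    rw [norm_sub_rev]
    exact hHy x e e'
  calc |rmU ν H γ θstar N m (x - γm • H x e) - rmU ν H γ θstar N m (x - γm • H x e')| ≤
        Real.sqrt (rmLsq KH lam γ N m) * ‖(x - γm • H x e) - (x - γm • H x e')‖ := hlipU _ _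
    _ ≤ Real.sqrt (rmLsq KH lam γ N m) * (γm * KH * ‖e - e'‖) :=
        mul_le_mul_of_nonneg_left hn (Real.sqrt_nonneg _)
    _ = (Real.sqrt (rmLsq KH lam γ N m) * (γm * KH)) * ‖e - e'‖ := by ring

include hα hGC hKH hHθ hHy hHcont hHint hdefν hlam hlamK hmono hγpos in
lemma rmU_gc_step : ∀ m, m + 1 ≤ N → ∀ x, ∀ l : ℝ, 0 ≤ l →
    ∫⁻ e, ENNReal.ofReal (Real.exp (l * rmU ν H γ θstar N m (x - γ (N - m) • H x e))) ∂ν ≤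
      ENNReal.ofReal (Real.exp (l * rmU ν H γ θstar N (m + 1) x +
        α * l ^ 2 * (rmLsq KH lam γ N m * (γ (N - m) * KH) ^ 2) / 4)) := by
  intro m hm x l hl
  have hγm0 : 0 < γ (N - m) := hγpos _ (by omega)
  set c : ℝ := Real.sqrt (rmLsq KH lam γ N m) * (γ (N - m) * KH) with hc
  have hc0 : 0 ≤ c := by positivity
  have hlipc := rmU_comp_lip ν α hα hGC H KH hKH hHθ hHy hHcont hHint h hdefν lam hlam hlamK
    hmono γ hγpos θstar N m hm x
  have hint := (rm_lip_integrable ν α hα hGC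
    (fun e => rmU ν H γ θstar N m (x - γ (N - m) • H x e)) c hc0 hlipc).2 l
  rw [← ofReal_integral_eq_lintegral_ofReal hint (ae_of_all _ fun e => (Real.exp_pos _).le)]
  refine ENNReal.ofReal_le_ofReal ?_
  have hstep := rm_gc_scaled ν α hα hGC
    (fun e => rmU ν H γ θstar N m (x - γ (N - m) • H x e)) c hc0 hlipc l hl
  have hc2 : c ^ 2 = rmLsq KH lam γ N m * (γ (N - m) * KH) ^ 2 := by
    rw [hc, mul_pow, Real.sq_sqrt (rmLsq_nonneg KH lam hlam hlamK γ N m)]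
  have hUdef : ∫ e, rmU ν H γ θstar N m (x - γ (N - m) • H x e) ∂ν =
      rmU ν H γ θstar N (m + 1) x := rfl
  rw [hUdef, hc2] at hstep
  exact hstep

include hα hGC hKH hHθ hHy hHcont hHint hdefν hlam hlamK hmono hγpos in
lemma rmU_avg : ∀ m, m + 1 ≤ N → ∀ x,
    ∫⁻ e, ENNReal.ofReal (rmU ν H γ θstar N m (x - γ (N - m) • H x e)) ∂ν =
      ENNReal.ofReal (rmU ν H γ θstar N (m + 1) x) := by
  intro m hm x
  have hγm0 : 0 < γ (N - m) := hγpos _ (by omega)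
  set c : ℝ := Real.sqrt (rmLsq KH lam γ N m) * (γ (N - m) * KH) with hc
  have hc0 : 0 ≤ c := by positivity
  have hlipc := rmU_comp_lip ν α hα hGC H KH hKH hHθ hHy hHcont hHint h hdefν lam hlam hlamK
    hmono γ hγpos θstar N m hm x
  have hint := (rm_lip_integrable ν α hα hGC
    (fun e => rmU ν H γ θstar N m (x - γ (N - m) • H x e)) c hc0 hlipc).1
  rw [← ofReal_integral_eq_lintegral_ofReal hint
    (ae_of_all _ fun e => rmU_nonneg ν H γ θstar N m _)]
  rfl

include hα hGC hKH hHθ hHy hHcont hHint hdefν hlam hlamK hmono hγpos in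
lemma rmU_cont : ∀ m, m ≤ N → Continuous (rmU ν H γ θstar N m) := fun m hm =>
  rm_cont_of_lip _ _ (rmU_lip ν α hα hGC H KH hKH hHθ hHy hHcont hHint h hdefν lam hlam hlamK
    hmono γ hγpos θstar N m hm)

end main

/-- The deterministic unrolling of the Robbins–Monro recursion. -/
noncomputable def rmPhi {d q : ℕ}
    (H : EuclideanSpace ℝ (Fin d) → EuclideanSpace ℝ (Fin q) → EuclideanSpace ℝ (Fin d))
    (γ : ℕ → ℝ) (θ0 : EuclideanSpace ℝ (Fin d)) :
    ℕ → (ℕ → EuclideanSpace ℝ (Fin q)) → EuclideanSpace ℝ (Fin d)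
  | 0, _ => θ0
  | (n + 1), y => rmPhi H γ θ0 n y - γ (n + 1) • H (rmPhi H γ θ0 n y) (y (n + 1))

lemma rmPhi_measurable {d q : ℕ}
    (H : EuclideanSpace ℝ (Fin d) → EuclideanSpace ℝ (Fin q) → EuclideanSpace ℝ (Fin d))
    (hHcont : Continuous fun p : (EuclideanSpace ℝ (Fin d)) × (EuclideanSpace ℝ (Fin q)) =>
      H p.1 p.2)
    (γ : ℕ → ℝ) (θ0 : EuclideanSpace ℝ (Fin d)) :
    ∀ n, Measurable (rmPhi H γ θ0 n) := by
  intro n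
  induction n with
  | zero => exact measurable_const
  | succ n ih =>
    exact ih.sub ((hHcont.measurable.comp (ih.prodMk (measurable_pi_apply (n + 1)))).const_smul
      (γ (n + 1)))

lemma rmPhi_congr {d q : ℕ}
    (H : EuclideanSpace ℝ (Fin d) → EuclideanSpace ℝ (Fin q) → EuclideanSpace ℝ (Fin d))
    (γ : ℕ → ℝ) (θ0 : EuclideanSpace ℝ (Fin d)) :
    ∀ n (y y' : ℕ → EuclideanSpace ℝ (Fin q)), (∀ i, 1 ≤ i → i ≤ n → y i = y' i) →
      rmPhi H γ θ0 n y = rmPhi H γ θ0 n y' := by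
  intro n
  induction n with
  | zero => intro y y' _; rfl
  | succ n ih =>
    intro y y' hyy
    have h1 : rmPhi H γ θ0 n y = rmPhi H γ θ0 n y' :=
      ih y y' fun i h1 h2 => hyy i h1 (by omega)
    show rmPhi H γ θ0 n y - γ (n + 1) • H (rmPhi H γ θ0 n y) (y (n + 1)) =
      rmPhi H γ θ0 n y' - γ (n + 1) • H (rmPhi H γ θ0 n y') (y' (n + 1))
    rw [h1, hyy (n + 1) (by omega) le_rfl]

lemma rm_lintegral_pair {Ω : Type*} [MeasurableSpace Ω] (μ : Measure Ω)
    {D E' : Type*} [MeasurableSpace D] [MeasurableSpace E']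
    (X : Ω → D) (Z : Ω → E') (hX : Measurable X) (hZ : Measurable Z)
    (ρ : Measure D) (ν : Measure E') [SFinite ν]
    (hmap : μ.map (fun ω => (X ω, Z ω)) = ρ.prod ν)
    (F : D → E' → ENNReal) (hF : Measurable (Function.uncurry F)) :
    ∫⁻ ω, F (X ω) (Z ω) ∂μ = ∫⁻ x, ∫⁻ e, F x e ∂ν ∂ρ := by
  calc ∫⁻ ω, F (X ω) (Z ω) ∂μ
      = ∫⁻ p, Function.uncurry F p ∂(μ.map fun ω => (X ω, Z ω)) :=
        (lintegral_map hF (hX.prodMk hZ)).symm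
    _ = ∫⁻ p, Function.uncurry F p ∂(ρ.prod ν) := by rw [hmap]
    _ = ∫⁻ x, ∫⁻ e, Function.uncurry F (x, e) ∂ν ∂ρ := lintegral_prod _ hF.aemeasurable
    _ = ∫⁻ x, ∫⁻ e, F x e ∂ν ∂ρ := rfl

end RMaux

/-- non-asymptotic Gaussian concentration bound for the
Robbins–Monro algorithm. -/
theorem robbins_monro_concentration
    {Ω : Type*} [m0 : MeasurableSpace Ω] (μ : Measure Ω) [IsProbabilityMeasure μ]
    {d q : ℕ} (α : ℝ) (hα : 0 < α)
    (Y : ℕ → Ω → EuclideanSpace ℝ (Fin q)) (hYmeas : ∀ i, Measurable (Y i))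
    (hiid : iIndepFun Y μ)
    (hident : ∀ i, IdentDistrib (Y i) (Y 1) μ μ)
    (hGC : ∀ f : EuclideanSpace ℝ (Fin q) → ℝ, LipschitzWith 1 f → ∀ l : ℝ, 0 ≤ l →
      ∫ ω, Real.exp (l * f (Y 1 ω)) ∂μ ≤ Real.exp (l * ∫ ω, f (Y 1 ω) ∂μ + α * l ^ 2 / 4))
    (H : EuclideanSpace ℝ (Fin d) → EuclideanSpace ℝ (Fin q) → EuclideanSpace ℝ (Fin d))
    (KH : ℝ) (hKH : 0 < KH)
    -- (HL): `H` is uniformly Lipschitz in `(θ, y)`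
    (hHlip : LipschitzWith (Real.toNNReal KH)
      (fun p : EuclideanSpace ℝ (Fin d) × EuclideanSpace ℝ (Fin q) => H p.1 p.2))
    (h : EuclideanSpace ℝ (Fin d) → EuclideanSpace ℝ (Fin d))
    (hdef : ∀ θ', h θ' = ∫ ω, H θ' (Y 1 ω) ∂μ)
    -- (HUA): `h` is `C¹` and uniformly attractive
    (hC1 : ContDiff ℝ 1 h) (lam : ℝ) (hlam : 0 < lam)
    (hattract : ∀ θ' ξ, lam * ‖ξ‖ ^ 2 ≤ ⟪fderiv ℝ h θ' ξ, ξ⟫)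
    (θstar : EuclideanSpace ℝ (Fin d)) (hroot : h θstar = 0)
    -- step sequence
    (γ : ℕ → ℝ) (hγpos : ∀ n, 1 ≤ n → 0 < γ n)
    (hγdiv : ¬ Summable γ) (hγsq : Summable (fun n => γ n ^ 2))
    -- the Robbins–Monro scheme
    (θ0 : EuclideanSpace ℝ (Fin d)) (θ : ℕ → Ω → EuclideanSpace ℝ (Fin d))
    (hinit : ∀ ω, θ 0 ω = θ0)
    (hrec : ∀ n ω, θ (n + 1) ω = θ n ω - γ (n + 1) • H (θ n ω) (Y (n + 1) ω)) :
    ∀ N : ℕ, 1 ≤ N → ∀ r : ℝ, 0 ≤ r →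
      μ {ω | r + ∫ ω', ‖θ N ω' - θstar‖ ∂μ ≤ ‖θ N ω - θstar‖} ≤
        ENNReal.ofReal (Real.exp (-r ^ 2 /
          (α * KH ^ 2 *
            (∏ k ∈ Finset.range N, (1 - 2 * lam * γ (k + 1) + KH ^ 2 * γ (k + 1) ^ 2)) *
            ∑ k ∈ Finset.Icc 1 N, γ k ^ 2 /
              ∏ j ∈ Finset.range k, (1 - 2 * lam * γ (j + 1) + KH ^ 2 * γ (j + 1) ^ 2)))) := by
  intro N hN r hr
  -- trivial case r = 0
  rcases eq_or_lt_of_le hr with hr0 | hrpos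
  · rw [← hr0]
    have he : (-(0:ℝ) ^ 2) = 0 := by norm_num
    rw [he, zero_div, Real.exp_zero, ENNReal.ofReal_one]
    exact prob_le_one
  -- trivial case d = 0
  rcases Nat.eq_zero_or_pos d with hd0 | hd
  · subst hd0
    haveI hss : Subsingleton (EuclideanSpace ℝ (Fin 0)) :=
      ⟨fun a b => by ext i; exact i.elim0⟩
    have hz : ∀ ω, ‖θ N ω - θstar‖ = 0 := fun ω => by
      rw [Subsingleton.elim (θ N ω - θstar) 0, norm_zero]
    have hint0 : ∫ ω', ‖θ N ω' - θstar‖ ∂μ = 0 :=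
      (integral_congr_ae (g := fun _ => (0:ℝ)) (ae_of_all _ hz)).trans (by simp)
    have hempty : {ω | r + ∫ ω', ‖θ N ω' - θstar‖ ∂μ ≤ ‖θ N ω - θstar‖} = ∅ := by
      ext ω
      simp only [Set.mem_setOf_eq, Set.mem_empty_iff_false, iff_false, not_le, hint0, hz ω]
      linarith
    rw [hempty]
    simp
  -- main case
  set ν : Measure (EuclideanSpace ℝ (Fin q)) := μ.map (Y 1) with hν
  haveI : IsProbabilityMeasure ν := Measure.isProbabilityMeasure_map (hYmeas 1).aemeasurable
  have hHcont : Continuous fun p : (EuclideanSpace ℝ (Fin d)) × (EuclideanSpace ℝ (Fin q)) =>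
      H p.1 p.2 := hHlip.continuous
  have hHacont : ∀ x, Continuous fun e => H x e := fun x =>
    hHcont.comp (continuous_const.prodMk continuous_id)
  have hKHcoe : ((Real.toNNReal KH : NNReal) : ℝ) = KH := Real.coe_toNNReal _ hKH.le
  have hHθ : ∀ e a b, ‖H a e - H b e‖ ≤ KH * ‖a - b‖ := by
    intro e a b
    have h1 := hHlip.dist_le_mul (a, e) (b, e)
    rw [Prod.dist_eq] at h1
    simp only [dist_self] at h1
    rw [hKHcoe, max_eq_left dist_nonneg, dist_eq_norm, dist_eq_norm] at h1
    exact h1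
  have hHy : ∀ x e e', ‖H x e - H x e'‖ ≤ KH * ‖e - e'‖ := by
    intro x e e'
    have h1 := hHlip.dist_le_mul (x, e) (x, e')
    rw [Prod.dist_eq] at h1
    simp only [dist_self] at h1
    rw [hKHcoe, max_eq_right dist_nonneg, dist_eq_norm, dist_eq_norm] at h1
    exact h1
  have hGCν : ∀ f : EuclideanSpace ℝ (Fin q) → ℝ, LipschitzWith 1 f → ∀ l : ℝ, 0 ≤ l →
      ∫ y, Real.exp (l * f y) ∂ν ≤ Real.exp (l * ∫ y, f y ∂ν + α * l ^ 2 / 4) := by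
    intro f hf l hl
    have hm1 : AEStronglyMeasurable (fun y : EuclideanSpace ℝ (Fin q) => Real.exp (l * f y))
        (μ.map (Y 1)) :=
      (Real.continuous_exp.comp (continuous_const.mul hf.continuous)).aestronglyMeasurable
    rw [hν, integral_map (hYmeas 1).aemeasurable hm1,
      integral_map (hYmeas 1).aemeasurable hf.continuous.aestronglyMeasurable]
    exact hGC f hf l hl
  have hHint : ∀ x, Integrable (fun e => H x e) ν := by
    intro x
    refine Integrable.mono' ((integrable_const ‖H x 0‖).add
      ((rm_norm_integrable ν α hα hGCν).const_mul KH)) (hHacont x).aestronglyMeasurable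
      (ae_of_all _ fun e => ?_)
    have h1 : H x e = H x 0 + (H x e - H x 0) := by abel
    rw [h1]
    refine le_trans (norm_add_le _ _) ?_
    have h2 := hHy x e 0
    rw [sub_zero] at h2
    exact add_le_add_right h2 _
  have hdefν : ∀ x, h x = ∫ e, H x e ∂ν := fun x =>
    (hdef x).trans (integral_map (hYmeas 1).aemeasurable (hHacont x).aestronglyMeasurable).symm
  have hmono := rm_strong_mono h hC1 lam hattract
  have hlamK : lam ≤ KH := by
    set ξ : EuclideanSpace ℝ (Fin d) := EuclideanSpace.single (⟨0, hd⟩ : Fin d) (1:ℝ) with hξ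
    have hξnorm : ‖ξ‖ = 1 := by rw [hξ, EuclideanSpace.norm_single]; norm_num
    have hc := rm_contraction ν H KH hHθ hHcont hHint h hdefν lam hmono (1/KH)
      (by positivity) ξ 0
    have hnn : (0:ℝ) ≤ ∫ e, ‖(ξ - (1/KH) • H ξ e) - (0 - (1/KH) • H 0 e)‖ ^ 2 ∂ν :=
      integral_nonneg fun e => sq_nonneg _
    have key := le_trans hnn hc
    rw [sub_zero, hξnorm, one_pow, mul_one] at key
    have e1 : KH ^ 2 * (1 / KH) ^ 2 = 1 := by field_simp
    have e2 : 2 * lam * (1 / KH) * KH = 2 * lam := by field_simp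
    nlinarith [key, hKH]
  have hfac : ∀ t : ℝ, 0 ≤ 1 - 2 * lam * t + KH ^ 2 * t ^ 2 :=
    rm_fac_nonneg lam KH hlam hlamK
  -- measurability and representation of the scheme
  have hθmeas : ∀ n, Measurable (θ n) := by
    intro n
    induction n with
    | zero =>
      have : θ 0 = fun _ => θ0 := funext hinit
      rw [this]; exact measurable_const
    | succ n ih =>
      have : θ (n+1) = fun ω => θ n ω - γ (n+1) • H (θ n ω) (Y (n+1) ω) := funext (hrec n)
      rw [this]
      exact ih.sub ((hHcont.measurable.comp (ih.prodMk (hYmeas (n+1)))).const_smul (γ (n+1)))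
  have hθPhi : ∀ n ω, θ n ω = rmPhi H γ θ0 n (fun i => Y i ω) := by
    intro n
    induction n with
    | zero => intro ω; rw [hinit]; rfl
    | succ n ih =>
      intro ω
      rw [hrec n ω, ih ω]
      rfl
  have hindep : ∀ n, IndepFun (θ n) (Y (n+1)) μ := by
    intro n
    have hdisj : Disjoint (Finset.Icc 1 n) ({n+1} : Finset ℕ) := by
      rw [Finset.disjoint_singleton_right, Finset.mem_Icc]
      omega
    have base := hiid.indepFun_finset (Finset.Icc 1 n) {n+1} hdisj hYmeas
    set gS : ((Finset.Icc 1 n : Finset ℕ) → EuclideanSpace ℝ (Fin q)) →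
        EuclideanSpace ℝ (Fin d) :=
      fun v => rmPhi H γ θ0 n (fun i => if hi : i ∈ Finset.Icc 1 n then v ⟨i, hi⟩ else 0)
      with hgS
    have hgSmeas : Measurable gS := by
      refine (rmPhi_measurable H hHcont γ θ0 n).comp ?_
      refine measurable_pi_lambda _ fun i => ?_
      by_cases hi : i ∈ Finset.Icc 1 n
      · simp only [dif_pos hi]
        exact measurable_pi_apply _
      · simp only [dif_neg hi]
        exact measurable_const
    set gT : ((({n+1} : Finset ℕ) : Finset ℕ) → EuclideanSpace ℝ (Fin q)) →
        EuclideanSpace ℝ (Fin q) := fun v => v ⟨n+1, Finset.mem_singleton_self _⟩ with hgT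
    have hgTmeas : Measurable gT := measurable_pi_apply _
    have hcomp := base.comp hgSmeas hgTmeas
    have heq1 : (gS ∘ fun ω (i : (Finset.Icc 1 n : Finset ℕ)) => Y i ω) = θ n := by
      funext ω
      show rmPhi H γ θ0 n (fun i => if hi : i ∈ Finset.Icc 1 n then Y i ω else 0) = θ n ω
      refine (rmPhi_congr H γ θ0 n _ _ fun i h1 h2 => ?_).trans (hθPhi n ω).symm
      have hi : i ∈ Finset.Icc 1 n := Finset.mem_Icc.2 ⟨h1, h2⟩
      simp only [dif_pos hi]
    have heq2 : (gT ∘ fun ω (i : (({n+1} : Finset ℕ) : Finset ℕ)) => Y i ω) = Y (n+1) := rfl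
    rw [heq1, heq2] at hcomp
    exact hcomp
  have hmapn : ∀ n, μ.map (fun ω => (θ n ω, Y (n+1) ω)) = (μ.map (θ n)).prod ν := by
    intro n
    have h1 := (indepFun_iff_map_prod_eq_prod_map_map (hθmeas n).aemeasurable
      (hYmeas (n+1)).aemeasurable).1 (hindep n)
    rw [h1, (hident (n+1)).map_eq]
  have hUcont : ∀ m, m ≤ N → Continuous (rmU ν H γ θstar N m) :=
    rmU_cont ν α hα hGCν H KH hKH hHθ hHy hHcont hHint h hdefν lam hlam hlamK hmono γ hγpos
      θstar N
  -- one-step inequality on Ω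
  have hstepΩ : ∀ (n m : ℕ), m + 1 ≤ N → N - m = n + 1 → ∀ l : ℝ, 0 ≤ l →
      (∫⁻ ω, ENNReal.ofReal (Real.exp (l * rmU ν H γ θstar N m (θ (n+1) ω))) ∂μ) ≤
        ENNReal.ofReal (Real.exp (α * l ^ 2 *
            (rmLsq KH lam γ N m * (γ (N - m) * KH) ^ 2) / 4)) *
          ∫⁻ ω, ENNReal.ofReal (Real.exp (l * rmU ν H γ θstar N (m+1) (θ n ω))) ∂μ := by
    intro n m hm hNm l hl
    have hmN : m ≤ N := by omega
    have hγn : γ (N - m) = γ (n+1) := by rw [hNm]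
    have h1 : ∀ ω, θ (n+1) ω = θ n ω - γ (N - m) • H (θ n ω) (Y (n+1) ω) := fun ω => by
      rw [hγn]; exact hrec n ω
    set F : EuclideanSpace ℝ (Fin d) → EuclideanSpace ℝ (Fin q) → ENNReal :=
      fun x e => ENNReal.ofReal (Real.exp (l * rmU ν H γ θstar N m (x - γ (N-m) • H x e)))
      with hF
    have hFmeas : Measurable (Function.uncurry F) := by
      refine Measurable.ennreal_ofReal ?_
      refine (Real.continuous_exp.comp (continuous_const.mul ?_)).measurable
      exact (hUcont m hmN).comp (continuous_fst.sub (hHcont.const_smul (γ (N - m))))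
    have h2 : ∫⁻ ω, ENNReal.ofReal (Real.exp (l * rmU ν H γ θstar N m (θ (n+1) ω))) ∂μ =
        ∫⁻ ω, F (θ n ω) (Y (n+1) ω) ∂μ := lintegral_congr fun ω => by rw [h1 ω]
    rw [h2, rm_lintegral_pair μ (θ n) (Y (n+1)) (hθmeas n) (hYmeas (n+1)) (μ.map (θ n)) ν
      (hmapn n) F hFmeas]
    have h3 : ∀ x, ∫⁻ e, F x e ∂ν ≤ ENNReal.ofReal (Real.exp (l * rmU ν H γ θstar N (m+1) x +
        α * l ^ 2 * (rmLsq KH lam γ N m * (γ (N - m) * KH) ^ 2) / 4)) := fun x =>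
      rmU_gc_step ν α hα hGCν H KH hKH hHθ hHy hHcont hHint h hdefν lam hlam hlamK hmono
        γ hγpos θstar N m hm x l hl
    have hUmeas : Measurable fun x => ENNReal.ofReal (Real.exp (l * rmU ν H γ θstar N (m+1) x)) :=
      (Real.continuous_exp.comp (continuous_const.mul (hUcont (m+1) hm))).measurable.ennreal_ofReal
    calc ∫⁻ x, ∫⁻ e, F x e ∂ν ∂(μ.map (θ n))
        ≤ ∫⁻ x, ENNReal.ofReal (Real.exp (l * rmU ν H γ θstar N (m+1) x +
            α * l ^ 2 * (rmLsq KH lam γ N m * (γ (N - m) * KH) ^ 2) / 4)) ∂(μ.map (θ n)) :=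
          lintegral_mono h3
      _ = ∫⁻ x, ENNReal.ofReal (Real.exp (α * l ^ 2 *
            (rmLsq KH lam γ N m * (γ (N - m) * KH) ^ 2) / 4)) *
            ENNReal.ofReal (Real.exp (l * rmU ν H γ θstar N (m+1) x)) ∂(μ.map (θ n)) := by
          refine lintegral_congr fun x => ?_
          rw [← ENNReal.ofReal_mul (Real.exp_pos _).le, ← Real.exp_add, add_comm]
      _ = ENNReal.ofReal (Real.exp (α * l ^ 2 *
            (rmLsq KH lam γ N m * (γ (N - m) * KH) ^ 2) / 4)) *
            ∫⁻ x, ENNReal.ofReal (Real.exp (l * rmU ν H γ θstar N (m+1) x)) ∂(μ.map (θ n)) :=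
          lintegral_const_mul _ hUmeas
      _ = ENNReal.ofReal (Real.exp (α * l ^ 2 *
            (rmLsq KH lam γ N m * (γ (N - m) * KH) ^ 2) / 4)) *
            ∫⁻ ω, ENNReal.ofReal (Real.exp (l * rmU ν H γ θstar N (m+1) (θ n ω))) ∂μ := by
          rw [lintegral_map hUmeas (hθmeas n)]
  -- the mgf chain
  have hchain : ∀ m, m ≤ N → ∀ l : ℝ, 0 ≤ l →
      (∫⁻ ω, ENNReal.ofReal (Real.exp (l * ‖θ N ω - θstar‖)) ∂μ) ≤
        ENNReal.ofReal (Real.exp (α * l ^ 2 / 4 * (KH ^ 2 *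
            ∑ k ∈ Finset.Icc (N - m + 1) N, γ k ^ 2 * rmLsq KH lam γ N (N - k)))) *
          ∫⁻ ω, ENNReal.ofReal (Real.exp (l * rmU ν H γ θstar N m (θ (N - m) ω))) ∂μ := by
    intro m
    induction m with
    | zero =>
      intro _ l hl
      have hIcc : Finset.Icc (N - 0 + 1) N = ∅ := Finset.Icc_eq_empty (by omega)
      rw [hIcc]
      simp only [Finset.sum_empty, mul_zero, Real.exp_zero, ENNReal.ofReal_one, one_mul,
        Nat.sub_zero]
      exact le_of_eq (lintegral_congr fun ω => rfl)
    | succ m ih =>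
      intro hm l hl
      set n := N - (m+1) with hn
      have hNm : N - m = n + 1 := by omega
      have hNn1 : N - (n+1) = m := by omega
      have h1 := ih (by omega) l hl
      rw [hNm] at h1
      have h2 := hstepΩ n m hm hNm l hl
      rw [hNm] at h2
      have hsum : ∑ k ∈ Finset.Icc (n+1) N, γ k ^ 2 * rmLsq KH lam γ N (N - k)
          = γ (n+1) ^ 2 * rmLsq KH lam γ N (N - (n+1)) +
            ∑ k ∈ Finset.Icc (n+1+1) N, γ k ^ 2 * rmLsq KH lam γ N (N - k) := by
        rw [← Finset.Ico_add_one_right_eq_Icc, ← Finset.Ico_add_one_right_eq_Icc]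
        exact Finset.sum_eq_sum_Ico_succ_bot (by omega) _
      rw [hNn1] at hsum
      calc ∫⁻ ω, ENNReal.ofReal (Real.exp (l * ‖θ N ω - θstar‖)) ∂μ
          ≤ ENNReal.ofReal (Real.exp (α * l ^ 2 / 4 * (KH ^ 2 *
              ∑ k ∈ Finset.Icc (n+1+1) N, γ k ^ 2 * rmLsq KH lam γ N (N - k)))) *
              ∫⁻ ω, ENNReal.ofReal (Real.exp (l * rmU ν H γ θstar N m (θ (n+1) ω))) ∂μ := h1
        _ ≤ ENNReal.ofReal (Real.exp (α * l ^ 2 / 4 * (KH ^ 2 *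
              ∑ k ∈ Finset.Icc (n+1+1) N, γ k ^ 2 * rmLsq KH lam γ N (N - k)))) *
              (ENNReal.ofReal (Real.exp (α * l ^ 2 *
                (rmLsq KH lam γ N m * (γ (n+1) * KH) ^ 2) / 4)) *
                ∫⁻ ω, ENNReal.ofReal (Real.exp (l * rmU ν H γ θstar N (m+1) (θ n ω))) ∂μ) :=
            mul_le_mul_right h2 _
        _ = (ENNReal.ofReal (Real.exp (α * l ^ 2 / 4 * (KH ^ 2 *
              ∑ k ∈ Finset.Icc (n+1+1) N, γ k ^ 2 * rmLsq KH lam γ N (N - k)))) *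
              ENNReal.ofReal (Real.exp (α * l ^ 2 *
                (rmLsq KH lam γ N m * (γ (n+1) * KH) ^ 2) / 4))) *
                ∫⁻ ω, ENNReal.ofReal (Real.exp (l * rmU ν H γ θstar N (m+1) (θ n ω))) ∂μ :=
            (mul_assoc _ _ _).symm
        _ = ENNReal.ofReal (Real.exp (α * l ^ 2 / 4 * (KH ^ 2 *
              ∑ k ∈ Finset.Icc (n+1) N, γ k ^ 2 * rmLsq KH lam γ N (N - k)))) *
                ∫⁻ ω, ENNReal.ofReal (Real.exp (l * rmU ν H γ θstar N (m+1) (θ n ω))) ∂μ := by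
            have hexp : α * l ^ 2 / 4 * (KH ^ 2 *
                ∑ k ∈ Finset.Icc (n+1+1) N, γ k ^ 2 * rmLsq KH lam γ N (N - k)) +
                  α * l ^ 2 * (rmLsq KH lam γ N m * (γ (n+1) * KH) ^ 2) / 4 =
                α * l ^ 2 / 4 * (KH ^ 2 *
                  ∑ k ∈ Finset.Icc (n+1) N, γ k ^ 2 * rmLsq KH lam γ N (N - k)) := by
              rw [hsum]
              ring
            rw [← ENNReal.ofReal_mul (Real.exp_pos _).le, ← Real.exp_add, hexp]
  -- the averaging chain (for the expectation identity)
  have hVstep : ∀ (n m : ℕ), m + 1 ≤ N → N - m = n + 1 →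
      (∫⁻ ω, ENNReal.ofReal (rmU ν H γ θstar N m (θ (n+1) ω)) ∂μ) =
        ∫⁻ ω, ENNReal.ofReal (rmU ν H γ θstar N (m+1) (θ n ω)) ∂μ := by
    intro n m hm hNm
    have hmN : m ≤ N := by omega
    have hγn : γ (N - m) = γ (n+1) := by rw [hNm]
    have h1 : ∀ ω, θ (n+1) ω = θ n ω - γ (N - m) • H (θ n ω) (Y (n+1) ω) := fun ω => by
      rw [hγn]; exact hrec n ω
    set F : EuclideanSpace ℝ (Fin d) → EuclideanSpace ℝ (Fin q) → ENNReal :=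
      fun x e => ENNReal.ofReal (rmU ν H γ θstar N m (x - γ (N-m) • H x e)) with hF
    have hFmeas : Measurable (Function.uncurry F) := Measurable.ennreal_ofReal
      ((hUcont m hmN).comp (continuous_fst.sub (hHcont.const_smul (γ (N - m))))).measurable
    have h2 : ∫⁻ ω, ENNReal.ofReal (rmU ν H γ θstar N m (θ (n+1) ω)) ∂μ =
        ∫⁻ ω, F (θ n ω) (Y (n+1) ω) ∂μ := lintegral_congr fun ω => by rw [h1 ω]
    rw [h2, rm_lintegral_pair μ (θ n) (Y (n+1)) (hθmeas n) (hYmeas (n+1)) (μ.map (θ n)) ν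
      (hmapn n) F hFmeas]
    have h3 : ∀ x, ∫⁻ e, F x e ∂ν = ENNReal.ofReal (rmU ν H γ θstar N (m+1) x) := fun x =>
      rmU_avg ν α hα hGCν H KH hKH hHθ hHy hHcont hHint h hdefν lam hlam hlamK hmono
        γ hγpos θstar N m hm x
    have hUmeas : Measurable fun x => ENNReal.ofReal (rmU ν H γ θstar N (m+1) x) :=
      (hUcont (m+1) hm).measurable.ennreal_ofReal
    rw [lintegral_congr h3, lintegral_map hUmeas (hθmeas n)]
  have hVchain : ∀ k, k ≤ N →
      (∫⁻ ω, ENNReal.ofReal (rmU ν H γ θstar N (N - k) (θ (N - (N - k)) ω)) ∂μ) =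
        ENNReal.ofReal (rmU ν H γ θstar N N θ0) := by
    intro k
    induction k with
    | zero =>
      intro _
      simp only [Nat.sub_zero, Nat.sub_self]
      rw [lintegral_congr fun ω => by rw [hinit ω]]
      simp [measure_univ]
    | succ k ih =>
      intro hk
      have e1 : N - (N - (k+1)) = k + 1 := by omega
      have e3 : N - (N - k) = k := by omega
      have hs := hVstep k (N - (k+1)) (by omega) (by omega)
      rw [e1, hs, show N - (k+1) + 1 = N - k from by omega]
      have ih' := ih (by omega)
      rw [e3] at ih'
      exact ih'
  have hδlint : ∫⁻ ω, ENNReal.ofReal (‖θ N ω - θstar‖) ∂μ =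
      ENNReal.ofReal (rmU ν H γ θstar N N θ0) := by
    have hv := hVchain N le_rfl
    simp only [Nat.sub_self, Nat.sub_zero] at hv
    exact (lintegral_congr fun ω => rfl).trans hv
  have hθNmeas : Measurable fun ω => ‖θ N ω - θstar‖ := ((hθmeas N).sub measurable_const).norm
  have hθNint : Integrable (fun ω => ‖θ N ω - θstar‖) μ := by
    refine ⟨hθNmeas.aestronglyMeasurable, ?_⟩
    rw [hasFiniteIntegral_iff_ofReal (ae_of_all _ fun ω => norm_nonneg _), hδlint]
    exact ENNReal.ofReal_lt_top
  set δ : ℝ := ∫ ω', ‖θ N ω' - θstar‖ ∂μ with hδdef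
  have hδeq : δ = rmU ν H γ θstar N N θ0 := by
    have h1 := ofReal_integral_eq_lintegral_ofReal hθNint (ae_of_all _ fun ω => norm_nonneg _)
    rw [hδlint] at h1
    exact (ENNReal.ofReal_eq_ofReal_iff (integral_nonneg fun ω => norm_nonneg _)
      (rmU_nonneg ν H γ θstar N N θ0)).1 h1
  have hPnonneg : (0:ℝ) ≤
      ∏ k ∈ Finset.range N, (1 - 2 * lam * γ (k + 1) + KH ^ 2 * γ (k + 1) ^ 2) :=
    Finset.prod_nonneg fun k _ => hfac _
  rcases eq_or_lt_of_le hPnonneg with hP0 | hPpos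
  · rw [← hP0]
    simp only [mul_zero, zero_mul, div_zero, Real.exp_zero, ENNReal.ofReal_one]
    exact prob_le_one
  · have hfacpos : ∀ k, k ∈ Finset.range N →
        (0:ℝ) < 1 - 2 * lam * γ (k + 1) + KH ^ 2 * γ (k + 1) ^ 2 := by
      intro k hk
      rcases lt_or_eq_of_le (hfac (γ (k+1))) with hlt | heq0
      · exact hlt
      · exact absurd (Finset.prod_eq_zero hk heq0.symm) hPpos.ne'
    have hPkpos : ∀ k, k ≤ N →
        (0:ℝ) < ∏ j ∈ Finset.range k, (1 - 2 * lam * γ (j + 1) + KH ^ 2 * γ (j + 1) ^ 2) :=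
      fun k hk => Finset.prod_pos fun j hj => hfacpos j (Finset.mem_range.2 (by
        have := Finset.mem_range.1 hj; omega))
    have hSpos : (0:ℝ) < ∑ k ∈ Finset.Icc 1 N, γ k ^ 2 /
        ∏ j ∈ Finset.range k, (1 - 2 * lam * γ (j + 1) + KH ^ 2 * γ (j + 1) ^ 2) := by
      refine Finset.sum_pos (fun k hk => ?_) (Finset.nonempty_Icc.2 hN)
      obtain ⟨h1, h2⟩ := Finset.mem_Icc.1 hk
      exact div_pos (pow_pos (hγpos k h1) 2) (hPkpos k h2)
    have hLsqIco : ∀ k, 1 ≤ k → k ≤ N → rmLsq KH lam γ N (N - k) =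
        ∏ j ∈ Finset.Ico k N, (1 - 2 * lam * γ (j + 1) + KH ^ 2 * γ (j + 1) ^ 2) := by
      intro k h1k hkN
      rw [Finset.prod_Ico_eq_prod_range]
      simp only [rmLsq]
      rw [← Finset.prod_range_reflect
        (fun j => 1 - 2 * lam * γ (k + j + 1) + KH ^ 2 * γ (k + j + 1) ^ 2) (N - k)]
      refine Finset.prod_congr rfl fun j hj => ?_
      have hj' : j < N - k := Finset.mem_range.1 hj
      have hidx : k + (N - k - 1 - j) + 1 = N - j := by omega
      rw [hidx]
    have hPsplit : ∀ k, 1 ≤ k → k ≤ N →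
        (∏ j ∈ Finset.range N, (1 - 2 * lam * γ (j + 1) + KH ^ 2 * γ (j + 1) ^ 2)) =
          (∏ j ∈ Finset.range k, (1 - 2 * lam * γ (j + 1) + KH ^ 2 * γ (j + 1) ^ 2)) *
            rmLsq KH lam γ N (N - k) := by
      intro k h1 h2
      rw [hLsqIco k h1 h2, Finset.range_eq_Ico, Finset.range_eq_Ico]
      exact (Finset.prod_Ico_consecutive (fun j => 1 - 2 * lam * γ (j + 1) + KH ^ 2 * γ (j + 1) ^ 2) (Nat.zero_le k) h2).symm
    have hC0 : KH ^ 2 * ∑ k ∈ Finset.Icc 1 N, γ k ^ 2 * rmLsq KH lam γ N (N - k) =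
        KH ^ 2 * ((∏ k ∈ Finset.range N, (1 - 2 * lam * γ (k + 1) + KH ^ 2 * γ (k + 1) ^ 2)) *
          ∑ k ∈ Finset.Icc 1 N, γ k ^ 2 /
            ∏ j ∈ Finset.range k, (1 - 2 * lam * γ (j + 1) + KH ^ 2 * γ (j + 1) ^ 2)) := by
      have hterm : ∀ k ∈ Finset.Icc 1 N, γ k ^ 2 * rmLsq KH lam γ N (N - k) =
          (∏ j ∈ Finset.range N, (1 - 2 * lam * γ (j + 1) + KH ^ 2 * γ (j + 1) ^ 2)) *
            (γ k ^ 2 /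
              ∏ j ∈ Finset.range k, (1 - 2 * lam * γ (j + 1) + KH ^ 2 * γ (j + 1) ^ 2)) := by
        intro k hk
        obtain ⟨h1, h2⟩ := Finset.mem_Icc.1 hk
        rw [hPsplit k h1 h2]
        have hne := (hPkpos k h2).ne'
        rw [mul_div_assoc', eq_div_iff hne]
        ring
      rw [Finset.sum_congr rfl hterm, ← Finset.mul_sum]
    set A : ℝ := α * KH ^ 2 *
        (∏ k ∈ Finset.range N, (1 - 2 * lam * γ (k + 1) + KH ^ 2 * γ (k + 1) ^ 2)) *
        ∑ k ∈ Finset.Icc 1 N, γ k ^ 2 /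
          ∏ j ∈ Finset.range k, (1 - 2 * lam * γ (j + 1) + KH ^ 2 * γ (j + 1) ^ 2) with hAdef
    have hA : 0 < A := by
      rw [hAdef]
      exact mul_pos (mul_pos (mul_pos hα (pow_pos hKH 2)) hPpos) hSpos
    have hmgf : ∀ l : ℝ, 0 ≤ l →
        ∫⁻ ω, ENNReal.ofReal (Real.exp (l * ‖θ N ω - θstar‖)) ∂μ ≤
          ENNReal.ofReal (Real.exp (l * δ + A * l ^ 2 / 4)) := by
      intro l hl
      have h1 := hchain N le_rfl l hl
      simp only [Nat.sub_self, Nat.zero_add, zero_add] at h1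
      have h2 : ∫⁻ ω, ENNReal.ofReal (Real.exp (l * rmU ν H γ θstar N N (θ 0 ω))) ∂μ =
          ENNReal.ofReal (Real.exp (l * rmU ν H γ θstar N N θ0)) := by
        rw [lintegral_congr fun ω => by rw [hinit ω]]
        simp [measure_univ]
      rw [h2] at h1
      refine le_trans h1 (le_of_eq ?_)
      have hexp2 : α * l ^ 2 / 4 *
          (KH ^ 2 * ∑ k ∈ Finset.Icc 1 N, γ k ^ 2 * rmLsq KH lam γ N (N - k)) +
            l * rmU ν H γ θstar N N θ0 = l * δ + A * l ^ 2 / 4 := by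
        rw [hδeq, hC0, hAdef]
        ring
      rw [← ENNReal.ofReal_mul (Real.exp_pos _).le, ← Real.exp_add, hexp2]
    have hcher := rm_chernoff_of_mgf μ (fun ω => ‖θ N ω - θstar‖) hθNmeas A δ r hA hr hmgf
    have hseteq : {ω | r + δ ≤ ‖θ N ω - θstar‖} = {ω | δ + r ≤ ‖θ N ω - θstar‖} :=
      Set.ext fun ω => by rw [add_comm]
    rw [hseteq]
    exact hcher
end

section
/- Under the uniform Lipschitz assumption on H and uniform attractivity of h, the two-flow L²-sensitivity bound holds: for starting points θ, θ' at step i ≤ n, E[|θ_n^{θ,i} − θ_n^{θ',i}|²] ≤ |θ − θ'|² ∏_{j=i}^{n−1}(1 − 2λ̲γ_{j+1} + [H]₁² γ_{j+1}²). -/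
open MeasureTheory Real ProbabilityTheory
open scoped RealInnerProductSpace

lemma rm_aux_mono {E : Type*} [NormedAddCommGroup E] [InnerProductSpace ℝ E]
    (h : E → E) (hC1 : ContDiff ℝ 1 h) (lam : ℝ)
    (hattract : ∀ x ξ, lam * ‖ξ‖ ^ 2 ≤ ⟪fderiv ℝ h x ξ, ξ⟫) (a b : E) :
    lam * ‖a - b‖ ^ 2 ≤ ⟪h a - h b, a - b⟫ := by
  set ξ := a - b with hξ
  have hdiff := hC1.differentiable one_ne_zero
  set L : E →L[ℝ] ℝ := innerSL ℝ ξ with hL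
  set f : ℝ → ℝ := fun t => L (h (b + t • ξ)) - lam * ‖ξ‖ ^ 2 * t with hf
  have hder : ∀ t : ℝ, HasDerivAt f (L (fderiv ℝ h (b + t • ξ) ξ) - lam * ‖ξ‖ ^ 2) t := by
    intro t
    have hc : HasDerivAt (fun t : ℝ => b + t • ξ) ξ t := by
      simpa using ((hasDerivAt_id t).smul_const ξ).const_add b
    have hh : HasFDerivAt h (fderiv ℝ h (b + t • ξ)) (b + t • ξ) :=
      (hdiff _).hasFDerivAt
    have := (L.hasFDerivAt.comp_hasDerivAt t (hh.comp_hasDerivAt t hc))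
    have h3 := this.sub ((hasDerivAt_id t).const_mul (lam * ‖ξ‖ ^ 2))
    simp only [mul_one, id_eq] at h3
    exact h3
  have hmono : Monotone f := by
    apply monotone_of_deriv_nonneg
    · exact fun t => (hder t).differentiableAt
    · intro t
      rw [(hder t).deriv]
      have := hattract (b + t • ξ) ξ
      have h2 : L (fderiv ℝ h (b + t • ξ) ξ) = ⟪fderiv ℝ h (b + t • ξ) ξ, ξ⟫ := by
        simp [hL, real_inner_comm]
      linarith [h2 ▸ this]
  have h01 := hmono (show (0:ℝ) ≤ 1 by norm_num)
  simp only [hf, zero_smul, add_zero, one_smul, mul_one, mul_zero, sub_zero] at h01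
  have hba : b + ξ = a := by simp [hξ]
  rw [hba] at h01
  have : L (h a) - L (h b) = ⟪h a - h b, ξ⟫ := by
    simp [hL, real_inner_comm, inner_sub_right]
  linarith [this ▸ (by linarith : lam * ‖ξ‖ ^ 2 ≤ L (h a) - L (h b))]

lemma rm_aux_inner {d q : ℕ} (ρ : Measure (EuclideanSpace ℝ (Fin q))) [IsProbabilityMeasure ρ]
    (H : EuclideanSpace ℝ (Fin d) → EuclideanSpace ℝ (Fin q) → EuclideanSpace ℝ (Fin d))
    (Hc : Continuous fun p : EuclideanSpace ℝ (Fin d) × EuclideanSpace ℝ (Fin q) => H p.1 p.2)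
    (KH : ℝ)
    (hHd : ∀ a b y, ‖H a y - H b y‖ ≤ KH * ‖a - b‖)
    (h : EuclideanSpace ℝ (Fin d) → EuclideanSpace ℝ (Fin d))
    (hmono : ∀ a b, lam * ‖a - b‖ ^ 2 ≤ ⟪h a - h b, a - b⟫)
    (hint : ∀ a, Integrable (fun y => H a y) ρ)
    (hha : ∀ a, h a = ∫ y, H a y ∂ρ)
    (γ' : ℝ) (hγ' : 0 < γ') (a b : EuclideanSpace ℝ (Fin d)) :
    ∫ y, ‖(a - b) - γ' • (H a y - H b y)‖ ^ 2 ∂ρ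
      ≤ (1 - 2 * lam * γ' + KH ^ 2 * γ' ^ 2) * ‖a - b‖ ^ 2 := by
  set u := a - b with hu
  set G : EuclideanSpace ℝ (Fin q) → EuclideanSpace ℝ (Fin d) := fun y => H a y - H b y with hG
  have hGint : Integrable G ρ := (hint a).sub (hint b)
  have hGc : Continuous G := (Hc.comp (continuous_const.prodMk continuous_id)).sub
    (Hc.comp (continuous_const.prodMk continuous_id))
  have hGbd : ∀ y, ‖G y‖ ≤ KH * ‖u‖ := fun y => hHd a b y
  -- pointwise expansion
  have hexp : ∀ y, ‖u - γ' • G y‖ ^ 2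
      = ‖u‖ ^ 2 - 2 * γ' * ⟪u, G y⟫ + γ' ^ 2 * ‖G y‖ ^ 2 := by
    intro y
    rw [norm_sub_sq_real, real_inner_smul_right, norm_smul]
    simp [mul_pow, abs_of_pos hγ']
    ring
  have hint1 : Integrable (fun y => ⟪u, G y⟫) ρ := by
    apply Integrable.mono' (integrable_const (‖u‖ * (KH * ‖u‖)))
      ((continuous_const.inner hGc).aestronglyMeasurable)
    filter_upwards with y
    exact (abs_real_inner_le_norm u (G y)).trans
      (by have := hGbd y; have := norm_nonneg u; nlinarith)
  have hint2 : Integrable (fun y => ‖G y‖ ^ 2) ρ := by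
    apply Integrable.mono' (integrable_const ((KH * ‖u‖) ^ 2))
      ((hGc.norm.pow 2).aestronglyMeasurable)
    filter_upwards with y
    simp only [Real.norm_eq_abs, Pi.pow_apply]
    rw [abs_of_nonneg (by positivity)]
    have h0 := hGbd y; have h1 := norm_nonneg (G y); nlinarith
  calc ∫ y, ‖u - γ' • G y‖ ^ 2 ∂ρ
      = ∫ y, (‖u‖ ^ 2 - 2 * γ' * ⟪u, G y⟫ + γ' ^ 2 * ‖G y‖ ^ 2) ∂ρ := by
        exact integral_congr_ae (Filter.Eventually.of_forall hexp)
    _ = ‖u‖ ^ 2 - 2 * γ' * ∫ y, ⟪u, G y⟫ ∂ρ + γ' ^ 2 * ∫ y, ‖G y‖ ^ 2 ∂ρ := by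
        have hI1 : Integrable (fun y => ‖u‖ ^ 2 - 2 * γ' * ⟪u, G y⟫) ρ :=
          (integrable_const _).sub (hint1.const_mul _)
        have hI2 : Integrable (fun y => γ' ^ 2 * ‖G y‖ ^ 2) ρ := hint2.const_mul _
        rw [integral_add hI1 hI2, integral_sub (integrable_const _) (hint1.const_mul _),
          integral_const, integral_const_mul, integral_const_mul]
        simp
    _ ≤ ‖u‖ ^ 2 - 2 * γ' * (lam * ‖u‖ ^ 2) + γ' ^ 2 * (KH ^ 2 * ‖u‖ ^ 2) := by
        have e1 : ∫ y, ⟪u, G y⟫ ∂ρ = ⟪u, h a - h b⟫ := by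
          rw [integral_inner hGint]
          congr 1
          rw [hha a, hha b, ← integral_sub (hint a) (hint b)]
        have i1 : lam * ‖u‖ ^ 2 ≤ ∫ y, ⟪u, G y⟫ ∂ρ := by
          rw [e1, real_inner_comm]; exact hmono a b
        have i2 : ∫ y, ‖G y‖ ^ 2 ∂ρ ≤ KH ^ 2 * ‖u‖ ^ 2 := by
          calc ∫ y, ‖G y‖ ^ 2 ∂ρ ≤ ∫ _, (KH * ‖u‖) ^ 2 ∂ρ := by
                apply integral_mono hint2 (integrable_const _)
                intro y
                exact pow_le_pow_left₀ (norm_nonneg (G y)) (hGbd y) 2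
            _ = KH ^ 2 * ‖u‖ ^ 2 := by rw [integral_const]; simp; ring
        nlinarith [sq_nonneg γ']
    _ = (1 - 2 * lam * γ' + KH ^ 2 * γ' ^ 2) * ‖u‖ ^ 2 := by ring

lemma rm_aux_outer {Ω : Type*} [m0 : MeasurableSpace Ω] (μ : Measure Ω) [IsProbabilityMeasure μ]
    {d q : ℕ}
    (X : Ω → EuclideanSpace ℝ (Fin d) × EuclideanSpace ℝ (Fin d))
    (Z : Ω → EuclideanSpace ℝ (Fin q))
    (hX : Measurable X) (hZ : Measurable Z) (hindep : IndepFun X Z μ)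
    (Φ : EuclideanSpace ℝ (Fin d) × EuclideanSpace ℝ (Fin d) → EuclideanSpace ℝ (Fin q) → ℝ)
    (hΦc : Continuous fun p : (EuclideanSpace ℝ (Fin d) × EuclideanSpace ℝ (Fin d)) ×
      EuclideanSpace ℝ (Fin q) => Φ p.1 p.2)
    (D : ℝ) (hD : 0 ≤ D) (hΦbd : ∀ p y, |Φ p y| ≤ D * ‖p.1 - p.2‖ ^ 2)
    (C : ℝ) (hC0 : 0 ≤ C) (hCbd : ∀ ω, ‖(X ω).1 - (X ω).2‖ ≤ C)
    (c' : ℝ)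
    (hinner : ∀ p : EuclideanSpace ℝ (Fin d) × EuclideanSpace ℝ (Fin d),
      ∫ y, Φ p y ∂(Measure.map Z μ) ≤ c' * ‖p.1 - p.2‖ ^ 2) :
    ∫ ω, Φ (X ω) (Z ω) ∂μ ≤ c' * ∫ ω, ‖(X ω).1 - (X ω).2‖ ^ 2 ∂μ := by
  haveI : IsProbabilityMeasure (μ.map X) := Measure.isProbabilityMeasure_map hX.aemeasurable
  haveI : IsProbabilityMeasure (μ.map Z) := Measure.isProbabilityMeasure_map hZ.aemeasurable
  have hmap : μ.map (fun ω => (X ω, Z ω)) = (μ.map X).prod (μ.map Z) :=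
    (indepFun_iff_map_prod_eq_prod_map_map hX.aemeasurable hZ.aemeasurable).1 hindep
  have hnc : Continuous fun x : EuclideanSpace ℝ (Fin d) × EuclideanSpace ℝ (Fin d) =>
      ‖x.1 - x.2‖ ^ 2 := ((continuous_fst.sub continuous_snd).norm.pow 2)
  have haeX : ∀ᵐ x ∂(μ.map X), ‖x.1 - x.2‖ ≤ C := by
    rw [ae_map_iff (p := fun x => ‖x.1 - x.2‖ ≤ C) hX.aemeasurable
      ((isClosed_le (continuous_fst.sub continuous_snd).norm continuous_const).measurableSet)]
    exact Filter.Eventually.of_forall hCbd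
  have haeP : ∀ᵐ p ∂((μ.map X).prod (μ.map Z)), ‖p.1.1 - p.1.2‖ ≤ C := by
    rw [← hmap, ae_map_iff (p := fun p => ‖p.1.1 - p.1.2‖ ≤ C) (hX.prodMk hZ).aemeasurable
      ((isClosed_le ((continuous_fst.fst.sub continuous_fst.snd).norm)
        continuous_const).measurableSet)]
    exact Filter.Eventually.of_forall hCbd
  have hΦint : Integrable (fun p : (EuclideanSpace ℝ (Fin d) × EuclideanSpace ℝ (Fin d)) ×
      EuclideanSpace ℝ (Fin q) => Φ p.1 p.2) ((μ.map X).prod (μ.map Z)) := by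
    apply Integrable.mono' (integrable_const (D * C ^ 2)) hΦc.aestronglyMeasurable
    filter_upwards [haeP] with p hp
    rw [Real.norm_eq_abs]
    exact (hΦbd p.1 p.2).trans
      (mul_le_mul_of_nonneg_left (pow_le_pow_left₀ (norm_nonneg _) hp 2) hD)
  calc ∫ ω, Φ (X ω) (Z ω) ∂μ
      = ∫ p, Φ p.1 p.2 ∂((μ.map X).prod (μ.map Z)) := by
        rw [← hmap, integral_map (hX.prodMk hZ).aemeasurable hΦc.aestronglyMeasurable]
    _ = ∫ x, ∫ y, Φ x y ∂(μ.map Z) ∂(μ.map X) := integral_prod _ hΦint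
    _ ≤ ∫ x, c' * ‖x.1 - x.2‖ ^ 2 ∂(μ.map X) := by
        apply integral_mono hΦint.integral_prod_left _ hinner
        apply Integrable.mono' (integrable_const (|c'| * C ^ 2))
          ((hnc.const_smul c').aestronglyMeasurable)
        filter_upwards [haeX] with x hx
        rw [Real.norm_eq_abs, Pi.smul_apply, smul_eq_mul, abs_mul,
          abs_of_nonneg (by positivity : (0:ℝ) ≤ ‖x.1 - x.2‖ ^ 2)]
        exact mul_le_mul_of_nonneg_left (pow_le_pow_left₀ (norm_nonneg _) hx 2) (abs_nonneg _)
    _ = c' * ∫ ω, ‖(X ω).1 - (X ω).2‖ ^ 2 ∂μ := by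
        rw [integral_const_mul, integral_map hX.aemeasurable hnc.aestronglyMeasurable]
open scoped RealInnerProductSpace

/-- two-flow `L²`-sensitivity bound for the Robbins–Monro algorithm. -/
theorem robbins_monro_flow_sensitivity
    {Ω : Type*} [m0 : MeasurableSpace Ω] (μ : Measure Ω) [IsProbabilityMeasure μ]
    {d q : ℕ}
    (Y : ℕ → Ω → EuclideanSpace ℝ (Fin q)) (hYmeas : ∀ i, Measurable (Y i))
    (hiid : iIndepFun Y μ)
    (hident : ∀ i, IdentDistrib (Y i) (Y 1) μ μ)
    (H : EuclideanSpace ℝ (Fin d) → EuclideanSpace ℝ (Fin q) → EuclideanSpace ℝ (Fin d))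
    (KH : ℝ) (hKH : 0 < KH)
    (hHlip : LipschitzWith (Real.toNNReal KH)
      (fun p : EuclideanSpace ℝ (Fin d) × EuclideanSpace ℝ (Fin q) => H p.1 p.2))
    (h : EuclideanSpace ℝ (Fin d) → EuclideanSpace ℝ (Fin d))
    (hdef : ∀ θ', h θ' = ∫ ω, H θ' (Y 1 ω) ∂μ)
    (hC1 : ContDiff ℝ 1 h) (lam : ℝ) (hlam : 0 < lam)
    (hattract : ∀ θ' ξ, lam * ‖ξ‖ ^ 2 ≤ ⟪fderiv ℝ h θ' ξ, ξ⟫)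
    (γ : ℕ → ℝ) (hγpos : ∀ n, 1 ≤ n → 0 < γ n)
    -- two flows driven by the same innovations, started at step `i` from `θ` and `θ'`
    (i n : ℕ) (hin : i ≤ n)
    (θ θ' : EuclideanSpace ℝ (Fin d))
    (θa θb : ℕ → Ω → EuclideanSpace ℝ (Fin d))
    (hinita : ∀ ω, θa i ω = θ) (hinitb : ∀ ω, θb i ω = θ')
    (hreca : ∀ j ω, i ≤ j → θa (j + 1) ω = θa j ω - γ (j + 1) • H (θa j ω) (Y (j + 1) ω))
    (hrecb : ∀ j ω, i ≤ j → θb (j + 1) ω = θb j ω - γ (j + 1) • H (θb j ω) (Y (j + 1) ω)) :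
    ∫ ω, ‖θa n ω - θb n ω‖ ^ 2 ∂μ ≤
      ‖θ - θ'‖ ^ 2 *
        ∏ j ∈ Finset.Ico i n, (1 - 2 * lam * γ (j + 1) + KH ^ 2 * γ (j + 1) ^ 2) := by
  have Hc : Continuous fun p : EuclideanSpace ℝ (Fin d) × EuclideanSpace ℝ (Fin q) =>
      H p.1 p.2 := hHlip.continuous
  have hHd : ∀ a b y, ‖H a y - H b y‖ ≤ KH * ‖a - b‖ := by
    intro a b y
    have h1 := hHlip.dist_le_mul (a, y) (b, y)
    rw [Prod.dist_eq] at h1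
    simp only [dist_self] at h1
    rw [max_eq_left dist_nonneg, Real.coe_toNNReal KH hKH.le] at h1
    simpa [dist_eq_norm] using h1
  have hHm : ∀ a, AEStronglyMeasurable (fun ω => H a (Y 1 ω)) μ := fun a =>
    (((Hc.comp (Continuous.prodMk_right a)).measurable).comp (hYmeas 1)).aestronglyMeasurable
  -- the degenerate case where every vector is zero
  have key0 : (∀ x : EuclideanSpace ℝ (Fin d), x = 0) →
      ∫ ω, ‖θa n ω - θb n ω‖ ^ 2 ∂μ ≤ ‖θ - θ'‖ ^ 2 *
        ∏ j ∈ Finset.Ico i n, (1 - 2 * lam * γ (j + 1) + KH ^ 2 * γ (j + 1) ^ 2) := by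
    intro hall0
    have h1 : (∫ ω, ‖θa n ω - θb n ω‖ ^ 2 ∂μ) = 0 := by
      have : ∀ ω, ‖θa n ω - θb n ω‖ ^ 2 = 0 := fun ω => by
        rw [hall0 (θa n ω - θb n ω)]; simp
      simp only [this, integral_zero]
    rw [h1, hall0 (θ - θ')]
    simp
  by_cases hIntY : Integrable (fun ω => H 0 (Y 1 ω)) μ
  case neg =>
    apply key0
    have hnone : ∀ a, ¬ Integrable (fun ω => H a (Y 1 ω)) μ := by
      intro a ha
      apply hIntY
      have hd2 : Integrable (fun ω => H 0 (Y 1 ω) - H a (Y 1 ω)) μ := by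
        apply Integrable.mono' (integrable_const (KH * ‖(0:EuclideanSpace ℝ (Fin d)) - a‖))
          ((hHm 0).sub (hHm a))
        exact Filter.Eventually.of_forall fun ω => hHd 0 a (Y 1 ω)
      exact (ha.add hd2).congr (Filter.Eventually.of_forall fun ω => by
        show H a (Y 1 ω) + (H 0 (Y 1 ω) - H a (Y 1 ω)) = H 0 (Y 1 ω); abel)
    have hz : h = fun _ => 0 := funext fun a => (hdef a).trans (integral_undef (hnone a))
    intro x
    have h2 := hattract 0 x
    rw [hz, fderiv_fun_const] at h2
    simp only [Pi.zero_apply, ContinuousLinearMap.zero_apply, inner_zero_left] at h2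
    have hs : ‖x‖ ^ 2 = 0 := le_antisymm (by nlinarith) (sq_nonneg _)
    have : ‖x‖ = 0 := by
      have := pow_eq_zero_iff (n := 2) (by norm_num) |>.1 hs
      exact this
    exact norm_eq_zero.1 this
  case pos =>
    rcases subsingleton_or_nontrivial (EuclideanSpace ℝ (Fin d)) with hsub | hnt
    · exact key0 fun x => Subsingleton.elim x 0
    -- main case
    have hint_all : ∀ a, Integrable (fun ω => H a (Y 1 ω)) μ := by
      intro a
      have hd2 : Integrable (fun ω => H a (Y 1 ω) - H 0 (Y 1 ω)) μ := by
        apply Integrable.mono' (integrable_const (KH * ‖a - (0:EuclideanSpace ℝ (Fin d))‖))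
          ((hHm a).sub (hHm 0))
        exact Filter.Eventually.of_forall fun ω => hHd a 0 (Y 1 ω)
      exact (hIntY.add hd2).congr (Filter.Eventually.of_forall fun ω => by
        show H 0 (Y 1 ω) + (H a (Y 1 ω) - H 0 (Y 1 ω)) = H a (Y 1 ω); abel)
    have hLiph : ∀ a b, ‖h a - h b‖ ≤ KH * ‖a - b‖ := by
      intro a b
      rw [hdef a, hdef b, ← integral_sub (hint_all a) (hint_all b)]
      refine (norm_integral_le_integral_norm _).trans ?_
      calc ∫ ω, ‖H a (Y 1 ω) - H b (Y 1 ω)‖ ∂μ ≤ ∫ _, KH * ‖a - b‖ ∂μ := by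
            apply integral_mono ((hint_all a).sub (hint_all b)).norm (integrable_const _)
            exact fun ω => hHd a b (Y 1 ω)
        _ = KH * ‖a - b‖ := by simp
    have hmono := rm_aux_mono h hC1 lam hattract
    have hHcont : ∀ a : EuclideanSpace ℝ (Fin d), Continuous fun y => H a y :=
      fun a => Hc.comp (Continuous.prodMk_right a)
    have hlamKH : lam ≤ KH := by
      obtain ⟨ξ, hξ⟩ := exists_ne (0 : EuclideanSpace ℝ (Fin d))
      have h1 := hmono ξ 0
      have h2 : ⟪h ξ - h 0, ξ - 0⟫ ≤ KH * ‖ξ - 0‖ * ‖ξ - 0‖ := by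
        refine (real_inner_le_norm _ _).trans ?_
        exact mul_le_mul_of_nonneg_right (hLiph ξ 0) (norm_nonneg _)
      have hpos : 0 < ‖ξ - 0‖ := by simpa [norm_pos_iff] using hξ
      have hsq : ‖ξ - 0‖ ^ 2 = ‖ξ - 0‖ * ‖ξ - 0‖ := by ring
      nlinarith [mul_pos hpos hpos]
    
    have hcnn : ∀ g : ℝ, 0 < g → 0 ≤ 1 - 2 * lam * g + KH ^ 2 * g ^ 2 := by
      intro g hg
      nlinarith [sq_nonneg (1 - KH * g), mul_nonneg hg.le (sub_nonneg.2 hlamKH)]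
    -- representation of the pair flow as a measurable function of finitely many innovations
    have hrep : ∀ j, i ≤ j → ∃ F : ((Finset.Icc (i+1) j : Finset ℕ) → EuclideanSpace ℝ (Fin q)) →
        EuclideanSpace ℝ (Fin d) × EuclideanSpace ℝ (Fin d),
        Measurable F ∧ ∀ ω, F (fun k => Y k ω) = (θa j ω, θb j ω) := by
      intro j hj
      induction j, hj using Nat.le_induction with
      | base =>
        exact ⟨fun _ => (θ, θ'), measurable_const, fun ω => by rw [hinita, hinitb]⟩
      | succ j hj ih =>
        obtain ⟨F, hFm, hFe⟩ := ih
        have hmem : ∀ k : (Finset.Icc (i+1) j : Finset ℕ), (k : ℕ) ∈ Finset.Icc (i+1) (j+1) := by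
          intro k
          have h2 := k.2
          simp only [Finset.mem_Icc] at h2 ⊢
          omega
        have hmem' : j + 1 ∈ Finset.Icc (i+1) (j+1) := by
          simp only [Finset.mem_Icc]; omega
        refine ⟨fun g =>
          ((F (fun k => g ⟨k, hmem k⟩)).1
              - γ (j+1) • H (F (fun k => g ⟨k, hmem k⟩)).1 (g ⟨j+1, hmem'⟩),
           (F (fun k => g ⟨k, hmem k⟩)).2
              - γ (j+1) • H (F (fun k => g ⟨k, hmem k⟩)).2 (g ⟨j+1, hmem'⟩)), ?_, ?_⟩
        · have hr : Measurable fun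
              (g : (Finset.Icc (i+1) (j+1) : Finset ℕ) → EuclideanSpace ℝ (Fin q)) =>
              F (fun k => g ⟨k, hmem k⟩) :=
            hFm.comp (measurable_pi_lambda _ (fun k => measurable_pi_apply _))
          have he : Measurable fun
              (g : (Finset.Icc (i+1) (j+1) : Finset ℕ) → EuclideanSpace ℝ (Fin q)) =>
              g ⟨j+1, hmem'⟩ := measurable_pi_apply _
          exact (hr.fst.sub ((Hc.measurable.comp (hr.fst.prodMk he)).const_smul (γ (j+1)))).prodMk
            (hr.snd.sub ((Hc.measurable.comp (hr.snd.prodMk he)).const_smul (γ (j+1))))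
        · intro ω
          have hbe : (fun k : (Finset.Icc (i+1) j : Finset ℕ) =>
              (fun k' : (Finset.Icc (i+1) (j+1) : Finset ℕ) => Y k' ω) ⟨k, hmem k⟩)
              = fun k : (Finset.Icc (i+1) j : Finset ℕ) => Y (↑k : ℕ) ω := rfl
          simp only [hbe, hFe ω]
          rw [hreca j ω hj, hrecb j ω hj]
    have hXmeas : ∀ j, i ≤ j → Measurable (fun ω => (θa j ω, θb j ω)) := by
      intro j hj
      obtain ⟨F, hFm, hFe⟩ := hrep j hj
      have : (fun ω => (θa j ω, θb j ω)) = fun ω => F (fun k => Y k ω) :=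
        funext fun ω => (hFe ω).symm
      rw [this]
      exact hFm.comp (measurable_pi_lambda _ (fun k => hYmeas k))
    have hindepj : ∀ j, i ≤ j → IndepFun (fun ω => (θa j ω, θb j ω)) (Y (j+1)) μ := by
      intro j hj
      obtain ⟨F, hFm, hFe⟩ := hrep j hj
      have hdisj : Disjoint (Finset.Icc (i+1) j) ({j+1} : Finset ℕ) := by
        simp only [Finset.disjoint_singleton_right, Finset.mem_Icc]
        omega
      have h1 := hiid.indepFun_finset (Finset.Icc (i+1) j) ({j+1} : Finset ℕ) hdisj hYmeas
      have h2 := h1.comp hFm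
        (measurable_pi_apply (⟨j+1, Finset.mem_singleton_self _⟩ : (({j+1} : Finset ℕ) : Type)))
      have e1 : (F ∘ fun ω (k : (Finset.Icc (i+1) j : Finset ℕ)) => Y (↑k : ℕ) ω)
          = fun ω => (θa j ω, θb j ω) := funext fun ω => hFe ω
      rw [e1] at h2
      exact h2
    have hbound : ∀ j, i ≤ j → ∃ C, 0 ≤ C ∧ ∀ ω, ‖θa j ω - θb j ω‖ ≤ C := by
      intro j hj
      induction j, hj using Nat.le_induction with
      | base =>
        exact ⟨‖θ - θ'‖, norm_nonneg _, fun ω => by rw [hinita, hinitb]⟩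
      | succ j hj ih =>
        obtain ⟨C, hC0, hC⟩ := ih
        have hγj : 0 < γ (j+1) := hγpos (j+1) (by omega)
        refine ⟨(1 + γ (j+1) * KH) * C, mul_nonneg (by nlinarith) hC0, fun ω => ?_⟩
        rw [hreca j ω hj, hrecb j ω hj]
        have e2 : θa j ω - γ (j+1) • H (θa j ω) (Y (j+1) ω)
            - (θb j ω - γ (j+1) • H (θb j ω) (Y (j+1) ω))
            = (θa j ω - θb j ω) - γ (j+1) • (H (θa j ω) (Y (j+1) ω) - H (θb j ω) (Y (j+1) ω)) := by
          rw [smul_sub]; abel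
        rw [e2]
        calc ‖_ - _‖ ≤ ‖θa j ω - θb j ω‖
              + ‖γ (j+1) • (H (θa j ω) (Y (j+1) ω) - H (θb j ω) (Y (j+1) ω))‖ := norm_sub_le _ _
          _ ≤ C + γ (j+1) * (KH * C) := by
              have h3 := hHd (θa j ω) (θb j ω) (Y (j+1) ω)
              have h4 := hC ω
              rw [norm_smul, Real.norm_eq_abs, abs_of_pos hγj]
              have : KH * ‖θa j ω - θb j ω‖ ≤ KH * C :=
                mul_le_mul_of_nonneg_left h4 hKH.le
              nlinarith [mul_le_mul_of_nonneg_left (h3.trans this) hγj.le]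
          _ = (1 + γ (j+1) * KH) * C := by ring
    suffices hP : ∀ N, i ≤ N → ∫ ω, ‖θa N ω - θb N ω‖ ^ 2 ∂μ ≤ ‖θ - θ'‖ ^ 2 *
        ∏ j ∈ Finset.Ico i N, (1 - 2 * lam * γ (j + 1) + KH ^ 2 * γ (j + 1) ^ 2) from hP n hin
    intro N hN
    induction N, hN using Nat.le_induction with
    | base =>
      simp only [hinita, hinitb]
      rw [integral_const]
      simp
    | succ N hN ih =>
      have hγ' : 0 < γ (N+1) := hγpos (N+1) (by omega)
      set γ' := γ (N+1) with hγdef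
      set c' := 1 - 2 * lam * γ' + KH ^ 2 * γ' ^ 2 with hc'def
      obtain ⟨C, hC0, hC⟩ := hbound N hN
      haveI : IsProbabilityMeasure (μ.map (Y (N+1))) :=
        Measure.isProbabilityMeasure_map (hYmeas (N+1)).aemeasurable
      have hρeq : μ.map (Y (N+1)) = μ.map (Y 1) := (hident (N+1)).map_eq
      have hintρ : ∀ a, Integrable (fun y => H a y) (μ.map (Y (N+1))) := by
        intro a
        rw [hρeq]
        exact (integrable_map_measure ((hHcont a).aestronglyMeasurable)
          (hYmeas 1).aemeasurable).2 (hint_all a)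
      have hhaρ : ∀ a, h a = ∫ y, H a y ∂(μ.map (Y (N+1))) := by
        intro a
        rw [hρeq, integral_map (hYmeas 1).aemeasurable ((hHcont a).aestronglyMeasurable)]
        exact hdef a
      have hinner := rm_aux_inner (μ.map (Y (N+1))) H Hc KH hHd h hmono hintρ hhaρ γ' hγ'
      have hΦc : Continuous fun p : (EuclideanSpace ℝ (Fin d) × EuclideanSpace ℝ (Fin d)) ×
          EuclideanSpace ℝ (Fin q) =>
          ‖(p.1.1 - p.1.2) - γ' • (H p.1.1 p.2 - H p.1.2 p.2)‖ ^ 2 := by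
        apply Continuous.pow
        apply Continuous.norm
        exact (continuous_fst.fst.sub continuous_fst.snd).sub
          (((Hc.comp (continuous_fst.fst.prodMk continuous_snd)).sub
            (Hc.comp (continuous_fst.snd.prodMk continuous_snd))).const_smul γ')
      have hΦbd : ∀ (p : EuclideanSpace ℝ (Fin d) × EuclideanSpace ℝ (Fin d)) y,
          |‖(p.1 - p.2) - γ' • (H p.1 y - H p.2 y)‖ ^ 2| ≤ (1 + γ' * KH) ^ 2 * ‖p.1 - p.2‖ ^ 2 := by
        intro p y
        rw [abs_of_nonneg (by positivity)]
        have h1 : ‖(p.1 - p.2) - γ' • (H p.1 y - H p.2 y)‖ ≤ (1 + γ' * KH) * ‖p.1 - p.2‖ := by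
          refine (norm_sub_le _ _).trans ?_
          rw [norm_smul, Real.norm_eq_abs, abs_of_pos hγ']
          nlinarith [mul_le_mul_of_nonneg_left (hHd p.1 p.2 y) hγ'.le]
        calc ‖(p.1 - p.2) - γ' • (H p.1 y - H p.2 y)‖ ^ 2
            ≤ ((1 + γ' * KH) * ‖p.1 - p.2‖) ^ 2 := pow_le_pow_left₀ (norm_nonneg _) h1 2
          _ = (1 + γ' * KH) ^ 2 * ‖p.1 - p.2‖ ^ 2 := by ring
      have houter := rm_aux_outer μ (fun ω => (θa N ω, θb N ω)) (Y (N+1))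
        (hXmeas N hN) (hYmeas (N+1)) (hindepj N hN)
        (fun p y => ‖(p.1 - p.2) - γ' • (H p.1 y - H p.2 y)‖ ^ 2) hΦc
        ((1 + γ' * KH) ^ 2) (by positivity) hΦbd C hC0 hC c'
        (fun p => hinner p.1 p.2)
      have hΔ : ∀ ω, θa (N+1) ω - θb (N+1) ω
          = (θa N ω - θb N ω) - γ' • (H (θa N ω) (Y (N+1) ω) - H (θb N ω) (Y (N+1) ω)) := by
        intro ω
        rw [hreca N ω hN, hrecb N ω hN, smul_sub]
        abel
      calc ∫ ω, ‖θa (N+1) ω - θb (N+1) ω‖ ^ 2 ∂μ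
          = ∫ ω, ‖(θa N ω - θb N ω)
              - γ' • (H (θa N ω) (Y (N+1) ω) - H (θb N ω) (Y (N+1) ω))‖ ^ 2 ∂μ :=
            integral_congr_ae (Filter.Eventually.of_forall fun ω => by simp only [hΔ ω])
        _ ≤ c' * ∫ ω, ‖θa N ω - θb N ω‖ ^ 2 ∂μ := houter
        _ ≤ c' * (‖θ - θ'‖ ^ 2 * ∏ j ∈ Finset.Ico i N,
              (1 - 2 * lam * γ (j + 1) + KH ^ 2 * γ (j + 1) ^ 2)) :=
            mul_le_mul_of_nonneg_left ih (hcnn γ' hγ')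
        _ = ‖θ - θ'‖ ^ 2 * ∏ j ∈ Finset.Ico i (N+1),
              (1 - 2 * lam * γ (j + 1) + KH ^ 2 * γ (j + 1) ^ 2) := by
            rw [Finset.prod_Ico_succ_top hN]
            ring
end

section
/- Let γ_n = c/n with c > 0 and Π_N = ∏_{k=1}^N (1 − 2λ̲γ_k + [H]₁²γ_k²). If c < 1/(2λ̲), then the series ∑_{k≥1} γ_k²/Π_k converges and Π_N ∑_{k=1}^N γ_k²/Π_k = O(N^{−2cλ̲}); if c > 1/(2λ̲), then Π_N ∑_{k=1}^N γ_k²/Π_k = O(N^{−1}). -/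
open Filter Asymptotics

private lemma aux_exp_le {a : ℝ} (h : -(1/2) ≤ a) :
    Real.exp (a - 2*a^2) ≤ 1 + a := by
  have hE : 0 < Real.exp (2*a^2 - a) := Real.exp_pos _
  have h2 : 2*a^2 - a + 1 ≤ Real.exp (2*a^2 - a) := Real.add_one_le_exp _
  have h3 : (1:ℝ) ≤ (1 + a) * Real.exp (2*a^2 - a) := by nlinarith
  have key : Real.exp (a - 2*a^2) = 1 / Real.exp (2*a^2 - a) := by
    rw [eq_div_iff (ne_of_gt hE), ← Real.exp_add]
    ring_nf
    exact Real.exp_zero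
  rw [key, div_le_iff₀ hE]
  nlinarith

private lemma aux_sum_inv_sq (N : ℕ) : ∑ k ∈ Finset.Icc 1 N, (((k:ℝ))^2)⁻¹ ≤ 2 := by
  have key : ∀ M : ℕ, 1 ≤ M → ∑ k ∈ Finset.Icc 1 M, (((k:ℝ))^2)⁻¹ ≤ 2 - (M:ℝ)⁻¹ := by
    intro M hM
    induction M with
    | zero => omega
    | succ n ih =>
      rcases Nat.lt_or_ge 1 (n+1) with h | h
      · have hn : 1 ≤ n := by omega
        have ihn := ih hn
        rw [Finset.sum_Icc_succ_top (by omega : 1 ≤ n + 1)]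
        have hn0 : (0:ℝ) < n := by exact_mod_cast hn
        have hn1 : (0:ℝ) < (n:ℝ) + 1 := by linarith
        have e1 : (((n:ℕ)+1:ℕ):ℝ) = (n:ℝ) + 1 := by push_cast; ring
        rw [e1]
        have e2 : (((n:ℝ)+1)^2)⁻¹ ≤ (n:ℝ)⁻¹ - ((n:ℝ)+1)⁻¹ := by
          rw [show (n:ℝ)⁻¹ - ((n:ℝ)+1)⁻¹ = ((n:ℝ) * ((n:ℝ)+1))⁻¹ by field_simp; ring]
          apply inv_anti₀ (by positivity)
          nlinarith
        linarith
      · have hn : n = 0 := by omega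
        subst hn
        norm_num
  rcases Nat.eq_zero_or_pos N with h | h
  · simp [h]
  · have h2 : (0:ℝ) ≤ (N:ℝ)⁻¹ := by positivity
    linarith [key N h]

set_option maxHeartbeats 2000000 in
/-- rate of the concentration factor for steps `γ_n = c/n`. -/
theorem step_over_n_rates
    (c lam H1 : ℝ) (hc : 0 < c) (hlam : 0 < lam) (hH1 : 0 < H1)
    (γ : ℕ → ℝ) (hγ : ∀ n : ℕ, γ n = c / n)
    (P : ℕ → ℝ)
    (hP : ∀ N, P N = ∏ k ∈ Finset.Icc 1 N, (1 - 2 * lam * γ k + H1 ^ 2 * γ k ^ 2))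
    (hpos : ∀ k : ℕ, 1 ≤ k → 0 < 1 - 2 * lam * γ k + H1 ^ 2 * γ k ^ 2) :
    (c < 1 / (2 * lam) →
      Summable (fun k : ℕ => γ (k + 1) ^ 2 / P (k + 1)) ∧
      (fun N : ℕ => P N * ∑ k ∈ Finset.Icc 1 N, γ k ^ 2 / P k) =O[atTop]
        (fun N : ℕ => (N : ℝ) ^ (-(2 * c * lam)))) ∧
    (1 / (2 * lam) < c →
      (fun N : ℕ => P N * ∑ k ∈ Finset.Icc 1 N, γ k ^ 2 / P k) =O[atTop]
        (fun N : ℕ => (N : ℝ)⁻¹)) := by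
  have hPpos : ∀ N, 0 < P N := by
    intro N; rw [hP]
    exact Finset.prod_pos (fun k hk => hpos k (Finset.mem_Icc.mp hk).1)
  have hβpos : 0 < 2*c*lam := by positivity
  have hsum_eq : ∀ N:ℕ, ∑ k ∈ Finset.Icc 1 N, ((k:ℝ))⁻¹ = ((harmonic N : ℚ) : ℝ) := by
    intro N; rw [harmonic_eq_sum_Icc]; push_cast; ring
  have hlog_le : ∀ N:ℕ, 1 ≤ N → Real.log N ≤ ∑ k ∈ Finset.Icc 1 N, ((k:ℝ))⁻¹ := by
    intro N hN
    rw [hsum_eq]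
    have h1 : Real.log N ≤ Real.log (↑(N+1)) := by
      apply Real.log_le_log (by exact_mod_cast hN)
      exact_mod_cast Nat.le_succ N
    exact h1.trans (log_add_one_le_harmonic N)
  have hharm_le : ∀ N:ℕ, ∑ k ∈ Finset.Icc 1 N, ((k:ℝ))⁻¹ ≤ 1 + Real.log N := by
    intro N; rw [hsum_eq]; exact harmonic_le_one_add_log N
  -- upper bound on P
  have hub : ∀ N:ℕ, 1 ≤ N → P N ≤ Real.exp (2*H1^2*c^2) * (N:ℝ)^(-(2*c*lam)) := by
    intro N hN
    have hNR : (0:ℝ) < N := by exact_mod_cast hN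
    have h1 : P N ≤ Real.exp (∑ k ∈ Finset.Icc 1 N, (1 - 2*lam*γ k + H1^2*γ k^2 - 1)) := by
      rw [hP, Real.exp_sum]
      refine Finset.prod_le_prod (fun k hk => (hpos k (Finset.mem_Icc.mp hk).1).le)
        (fun k hk => ?_)
      linarith [Real.add_one_le_exp (1 - 2*lam*γ k + H1^2*γ k^2 - 1)]
    have h2 : ∑ k ∈ Finset.Icc 1 N, (1 - 2*lam*γ k + H1^2*γ k^2 - 1)
        = -(2*c*lam) * (∑ k ∈ Finset.Icc 1 N, ((k:ℝ))⁻¹)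
          + H1^2*c^2 * (∑ k ∈ Finset.Icc 1 N, (((k:ℝ))^2)⁻¹) := by
      rw [Finset.mul_sum, Finset.mul_sum, ← Finset.sum_add_distrib]
      refine Finset.sum_congr rfl (fun k hk => ?_)
      rw [hγ]; ring
    have h3 := hlog_le N hN
    have h4 := aux_sum_inv_sq N
    have h5 : ∑ k ∈ Finset.Icc 1 N, (1 - 2*lam*γ k + H1^2*γ k^2 - 1)
        ≤ -(2*c*lam) * Real.log N + 2*H1^2*c^2 := by
      rw [h2]
      have e1 : -(2*c*lam) * (∑ k ∈ Finset.Icc 1 N, ((k:ℝ))⁻¹)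
          ≤ -(2*c*lam) * Real.log N := by nlinarith
      have e2 : H1^2*c^2 * (∑ k ∈ Finset.Icc 1 N, (((k:ℝ))^2)⁻¹) ≤ H1^2*c^2 * 2 := by
        have : (0:ℝ) ≤ H1^2*c^2 := by positivity
        nlinarith
      linarith
    calc P N ≤ _ := h1
      _ ≤ Real.exp (-(2*c*lam) * Real.log N + 2*H1^2*c^2) := Real.exp_le_exp.mpr h5
      _ = Real.exp (2*H1^2*c^2) * (N:ℝ)^(-(2*c*lam)) := by
          rw [Real.rpow_def_of_pos hNR, ← Real.exp_add]
          congr 1; ring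
  -- lower bound on P
  obtain ⟨CL, hCL, hlb⟩ : ∃ CL : ℝ, 0 < CL ∧ ∀ N:ℕ, 1 ≤ N → CL * (N:ℝ)^(-(2*c*lam)) ≤ P N := by
    set E : ℝ := 2*(2*lam*c + H1^2*c^2)^2 with hE
    have hEpos : 0 < E := by positivity
    set k0 : ℕ := max 1 (Nat.ceil (4*lam*c)) with hk0
    have hk01 : 1 ≤ k0 := le_max_left _ _
    have key : ∀ k:ℕ, k0 < k →
        Real.exp (-(2*c*lam)*((k:ℝ))⁻¹ - E*(((k:ℝ))⁻¹)^2)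
          ≤ 1 - 2*lam*γ k + H1^2*γ k^2 := by
      intro k hk
      have hk1 : 1 ≤ k := le_trans hk01 hk.le
      have hkR : (0:ℝ) < k := by exact_mod_cast hk1
      have hkc : 4*lam*c ≤ (k:ℝ) := by
        have h1 : Nat.ceil (4*lam*c) ≤ k := le_trans (le_max_right 1 _) hk.le
        calc 4*lam*c ≤ (Nat.ceil (4*lam*c) : ℝ) := Nat.le_ceil _
          _ ≤ (k:ℝ) := by exact_mod_cast h1
      have hu0 : 0 < ((k:ℝ))⁻¹ := by positivity
      have hu1 : ((k:ℝ))⁻¹ ≤ 1 := by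
        apply inv_le_one_of_one_le₀
        exact_mod_cast hk1
      have hku : (k:ℝ) * ((k:ℝ))⁻¹ = 1 := mul_inv_cancel₀ (ne_of_gt hkR)
      set u : ℝ := ((k:ℝ))⁻¹ with hu
      have hu2 : 2*lam*c*u ≤ 1/2 := by
        have h2 := mul_le_mul_of_nonneg_right hkc hu0.le
        rw [hku] at h2
        linarith
      have hγk : γ k = c * u := by rw [hγ, division_def]
      have hteq : 1 - 2*lam*γ k + H1^2*γ k^2
          = 1 + (-(2*lam)*(c*u) + H1^2*(c*u)^2) := by rw [hγk]; ring
      have hB0 : (0:ℝ) ≤ H1^2*c^2*u^2 := by positivity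
      have ha2 : -(1/2) ≤ -(2*lam)*(c*u) + H1^2*(c*u)^2 := by nlinarith [hB0]
      have hu12 : 0 ≤ u * (1 - u) := mul_nonneg hu0.le (by linarith)
      have hA0 : (0:ℝ) ≤ 2*lam*c*u := by positivity
      have hC0 : (0:ℝ) ≤ H1^2*c^2*u := by positivity
      have hBC : H1^2*c^2*u^2 ≤ H1^2*c^2*u := by
        nlinarith [mul_nonneg (show (0:ℝ) ≤ H1^2*c^2 by positivity) hu12]
      have hBC2 : (H1^2*c^2*u^2)^2 ≤ (H1^2*c^2*u)^2 := pow_le_pow_left₀ hB0 hBC 2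
      have b2 : (-(2*lam)*(c*u) + H1^2*(c*u)^2)^2 ≤ ((2*lam*c + H1^2*c^2)*u)^2 := by
        nlinarith [hBC2, mul_nonneg hA0 hB0, mul_nonneg hA0 hC0]
      have harg : -(2*c*lam)*u - E*u^2
          ≤ (-(2*lam)*(c*u) + H1^2*(c*u)^2) - 2*(-(2*lam)*(c*u) + H1^2*(c*u)^2)^2 := by
        rw [hE]
        nlinarith [b2, hB0]
      rw [hteq]
      exact le_trans (Real.exp_le_exp.mpr harg) (aux_exp_le ha2)
    have hprod_lb : ∀ N:ℕ, k0 ≤ N →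
        P k0 * Real.exp (-(2*c*lam) - 2*E) * (N:ℝ)^(-(2*c*lam)) ≤ P N := by
      intro N hN
      have hN1 : 1 ≤ N := le_trans hk01 hN
      have hNR : (0:ℝ) < N := by exact_mod_cast hN1
      have hsplit : P N = P k0 * ∏ k ∈ Finset.Ioc k0 N, (1 - 2*lam*γ k + H1^2*γ k^2) := by
        rw [hP, hP, show Finset.Icc 1 k0 = Finset.Ioc 0 k0 from Finset.Icc_add_one_left_eq_Ioc 0 k0,
          show Finset.Icc 1 N = Finset.Ioc 0 N from Finset.Icc_add_one_left_eq_Ioc 0 N,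
          Finset.prod_Ioc_consecutive _ (Nat.zero_le k0) hN]
      have hexp : Real.exp (∑ k ∈ Finset.Ioc k0 N, (-(2*c*lam)*((k:ℝ))⁻¹ - E*(((k:ℝ))⁻¹)^2))
          ≤ ∏ k ∈ Finset.Ioc k0 N, (1 - 2*lam*γ k + H1^2*γ k^2) := by
        rw [Real.exp_sum]
        exact Finset.prod_le_prod (fun k _ => (Real.exp_pos _).le)
          (fun k hk => key k (Finset.mem_Ioc.mp hk).1)
      have hsub : Finset.Ioc k0 N ⊆ Finset.Icc 1 N := by
        intro k hk; rw [Finset.mem_Ioc] at hk; rw [Finset.mem_Icc]; omega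
      have e1 : ∑ k ∈ Finset.Ioc k0 N, ((k:ℝ))⁻¹ ≤ ∑ k ∈ Finset.Icc 1 N, ((k:ℝ))⁻¹ :=
        Finset.sum_le_sum_of_subset_of_nonneg hsub (fun k _ _ => by positivity)
      have e2 : ∑ k ∈ Finset.Ioc k0 N, (((k:ℝ))⁻¹)^2 ≤ ∑ k ∈ Finset.Icc 1 N, (((k:ℝ))^2)⁻¹ := by
        calc ∑ k ∈ Finset.Ioc k0 N, (((k:ℝ))⁻¹)^2
            ≤ ∑ k ∈ Finset.Icc 1 N, (((k:ℝ))⁻¹)^2 :=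
              Finset.sum_le_sum_of_subset_of_nonneg hsub (fun k _ _ => by positivity)
          _ = ∑ k ∈ Finset.Icc 1 N, (((k:ℝ))^2)⁻¹ :=
              Finset.sum_congr rfl (fun k _ => by rw [inv_pow])
      have e3 : ∑ k ∈ Finset.Ioc k0 N, (-(2*c*lam)*((k:ℝ))⁻¹ - E*(((k:ℝ))⁻¹)^2)
          = -(2*c*lam) * (∑ k ∈ Finset.Ioc k0 N, ((k:ℝ))⁻¹)
            - E * (∑ k ∈ Finset.Ioc k0 N, (((k:ℝ))⁻¹)^2) := by
        rw [Finset.mul_sum, Finset.mul_sum, ← Finset.sum_sub_distrib]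
      have e4 : -(2*c*lam)*(1 + Real.log N) - 2*E
          ≤ ∑ k ∈ Finset.Ioc k0 N, (-(2*c*lam)*((k:ℝ))⁻¹ - E*(((k:ℝ))⁻¹)^2) := by
        rw [e3]
        have f1 := hharm_le N
        have f2 := aux_sum_inv_sq N
        nlinarith [e1, e2, hβpos, hEpos]
      calc P k0 * Real.exp (-(2*c*lam) - 2*E) * (N:ℝ)^(-(2*c*lam))
          = P k0 * Real.exp ((-(2*c*lam) - 2*E) + Real.log N * (-(2*c*lam))) := by
            rw [Real.rpow_def_of_pos hNR, mul_assoc, ← Real.exp_add]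
        _ = P k0 * Real.exp (-(2*c*lam)*(1 + Real.log N) - 2*E) := by
            congr 1; ring
        _ ≤ P k0 * ∏ k ∈ Finset.Ioc k0 N, (1 - 2*lam*γ k + H1^2*γ k^2) :=
            mul_le_mul_of_nonneg_left (le_trans (Real.exp_le_exp.mpr e4) hexp) (hPpos k0).le
        _ = P N := hsplit.symm
    have hne : (Finset.Icc 1 k0).Nonempty := ⟨1, Finset.mem_Icc.mpr ⟨le_refl 1, hk01⟩⟩
    have hmpos : 0 < (Finset.Icc 1 k0).inf' hne P := by
      rw [Finset.lt_inf'_iff]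
      exact fun b _ => hPpos b
    have hc2pos : 0 < P k0 * Real.exp (-(2*c*lam) - 2*E) := mul_pos (hPpos k0) (Real.exp_pos _)
    refine ⟨min ((Finset.Icc 1 k0).inf' hne P) (P k0 * Real.exp (-(2*c*lam) - 2*E)),
      lt_min hmpos hc2pos, ?_⟩
    intro N hN
    have hNR : (0:ℝ) < N := by exact_mod_cast hN
    rcases le_or_gt N k0 with h | h
    · have h1 : (N:ℝ)^(-(2*c*lam)) ≤ 1 :=
        Real.rpow_le_one_of_one_le_of_nonpos (by exact_mod_cast hN) (by linarith)
      have h2 : (Finset.Icc 1 k0).inf' hne P ≤ P N :=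
        Finset.inf'_le P (Finset.mem_Icc.mpr ⟨hN, h⟩)
      have h3 : (0:ℝ) ≤ min ((Finset.Icc 1 k0).inf' hne P) (P k0 * Real.exp (-(2*c*lam) - 2*E)) :=
        (lt_min hmpos hc2pos).le
      calc min _ _ * (N:ℝ)^(-(2*c*lam)) ≤ min _ _ * 1 := mul_le_mul_of_nonneg_left h1 h3
        _ = min _ _ := mul_one _
        _ ≤ (Finset.Icc 1 k0).inf' hne P := min_le_left _ _
        _ ≤ P N := h2
    · calc min _ _ * (N:ℝ)^(-(2*c*lam))
          ≤ (P k0 * Real.exp (-(2*c*lam) - 2*E)) * (N:ℝ)^(-(2*c*lam)) :=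
            mul_le_mul_of_nonneg_right (min_le_right _ _) (Real.rpow_nonneg hNR.le _)
        _ ≤ P N := hprod_lb N h.le
  -- pointwise bound on the summands
  have hB : ∀ k:ℕ, 1 ≤ k → γ k ^2 / P k ≤ (c^2/CL) * (k:ℝ)^(2*c*lam - 2) := by
    intro k hk
    have hkR : (0:ℝ) < k := by exact_mod_cast hk
    have hlbk := hlb k hk
    have hrp : (0:ℝ) < CL * (k:ℝ)^(-(2*c*lam)) := by
      exact mul_pos hCL (Real.rpow_pos_of_pos hkR _)
    have h1 : γ k ^2 / P k ≤ γ k^2 / (CL * (k:ℝ)^(-(2*c*lam))) := by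
      apply div_le_div_of_nonneg_left (sq_nonneg _) hrp hlbk
    have h2 : γ k^2 = c^2 * (((k:ℝ))^2)⁻¹ := by rw [hγ]; ring
    have h3 : (k:ℝ)^(2*c*lam - 2) = (((k:ℝ))^2)⁻¹ / (k:ℝ)^(-(2*c*lam)) := by
      rw [div_eq_mul_inv, ← Real.rpow_neg hkR.le, neg_neg,
        show (((k:ℝ))^2)⁻¹ = (k:ℝ)^(-2:ℝ) by
          rw [← Real.rpow_natCast (k:ℝ) 2, ← Real.rpow_neg hkR.le]; norm_num,
        ← Real.rpow_add hkR]
      congr 1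
      ring
    calc γ k ^2 / P k ≤ γ k^2 / (CL * (k:ℝ)^(-(2*c*lam))) := h1
      _ = (c^2/CL) * (k:ℝ)^(2*c*lam - 2) := by
        rw [h2, h3, div_mul_div_comm]
  have hsumnn : ∀ N : ℕ, 0 ≤ ∑ k ∈ Finset.Icc 1 N, γ k ^ 2 / P k := by
    intro N
    exact Finset.sum_nonneg (fun k _ => div_nonneg (sq_nonneg _) (hPpos k).le)
  constructor
  · -- case c < 1/(2 lam)
    intro hsmall
    have hβ1 : 2*c*lam < 1 := by
      rw [lt_div_iff₀ (by positivity : (0:ℝ) < 2*lam)] at hsmall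
      nlinarith
    have hsum : Summable (fun k:ℕ => ((k:ℝ))^(2*c*lam-2)) :=
      Real.summable_nat_rpow.2 (by linarith)
    have hsum1 : Summable (fun k:ℕ => (((k+1:ℕ)):ℝ)^(2*c*lam-2)) :=
      (summable_nat_add_iff 1).2 hsum
    have hsumB : Summable (fun k:ℕ => (c^2/CL) * (((k+1:ℕ)):ℝ)^(2*c*lam-2)) :=
      hsum1.mul_left _
    have hg : Summable (fun k : ℕ => γ (k + 1) ^ 2 / P (k + 1)) := by
      refine Summable.of_nonneg_of_le (fun k => div_nonneg (sq_nonneg _) (hPpos _).le)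
        (fun k => ?_) hsumB
      exact hB (k+1) (by omega)
    refine ⟨hg, ?_⟩
    have hS0 : 0 ≤ ∑' k, γ (k + 1) ^ 2 / P (k + 1) :=
      tsum_nonneg (fun k => div_nonneg (sq_nonneg _) (hPpos _).le)
    have hpart : ∀ N:ℕ, ∑ k ∈ Finset.Icc 1 N, γ k ^ 2 / P k
        ≤ ∑' k, γ (k + 1) ^ 2 / P (k + 1) := by
      intro N
      rw [← Finset.Ico_add_one_right_eq_Icc, Finset.sum_Ico_eq_sum_range]
      have h1 : ∀ i ∈ Finset.range (N + 1 - 1), γ (1+i) ^ 2 / P (1+i) = γ (i+1) ^ 2 / P (i+1) := by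
        intro i _; rw [Nat.add_comm 1 i]
      rw [Finset.sum_congr rfl h1]
      exact Summable.sum_le_tsum (Finset.range (N + 1 - 1))
        (fun i _ => div_nonneg (sq_nonneg _) (hPpos _).le) hg
    rw [isBigO_iff]
    refine ⟨Real.exp (2*H1^2*c^2) * (∑' k, γ (k + 1) ^ 2 / P (k + 1)), ?_⟩
    filter_upwards [eventually_ge_atTop 1] with N hN
    have hNR : (0:ℝ) < N := by exact_mod_cast hN
    have hrp : (0:ℝ) ≤ (N:ℝ)^(-(2*c*lam)) := Real.rpow_nonneg hNR.le _
    simp only [Real.norm_eq_abs]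
    rw [abs_of_nonneg (mul_nonneg (hPpos N).le (hsumnn N)), abs_of_nonneg hrp]
    calc P N * ∑ k ∈ Finset.Icc 1 N, γ k ^ 2 / P k
        ≤ (Real.exp (2*H1^2*c^2) * (N:ℝ)^(-(2*c*lam))) * (∑' k, γ (k + 1) ^ 2 / P (k + 1)) :=
          mul_le_mul (hub N hN) (hpart N) (hsumnn N) (by positivity)
      _ = Real.exp (2*H1^2*c^2) * (∑' k, γ (k + 1) ^ 2 / P (k + 1)) * (N:ℝ)^(-(2*c*lam)) := by
          ring
  · -- case 1/(2 lam) < c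
    intro hbig
    have hβ1 : 1 < 2*c*lam := by
      rw [div_lt_iff₀ (by positivity : (0:ℝ) < 2*lam)] at hbig
      nlinarith
    set p : ℝ := 2*c*lam - 1 with hp
    have hppos : 0 < p := by rw [hp]; linarith
    have hK : ∀ N:ℕ, ∑ k ∈ Finset.Icc 1 N, (k:ℝ)^(2*c*lam-2)
        ≤ (1 + p⁻¹) * (N:ℝ)^p := by
      intro N
      have hexp : 2*c*lam - 2 = p - 1 := by rw [hp]; ring
      rcases le_or_gt 1 p with hP1 | hP1
      · -- p ≥ 1 : each term ≤ N^(p-1)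
        rcases Nat.eq_zero_or_pos N with h0 | h0
        · subst h0; simp [Real.zero_rpow (ne_of_gt hppos)]
        have hNR : (0:ℝ) < N := by exact_mod_cast h0
        have hterm : ∀ k ∈ Finset.Icc 1 N, (k:ℝ)^(2*c*lam-2) ≤ (N:ℝ)^(p-1) := by
          intro k hk
          rw [hexp]
          exact Real.rpow_le_rpow (by positivity)
            (by exact_mod_cast (Finset.mem_Icc.mp hk).2) (by linarith)
        calc ∑ k ∈ Finset.Icc 1 N, (k:ℝ)^(2*c*lam-2)
            ≤ ∑ k ∈ Finset.Icc 1 N, (N:ℝ)^(p-1) := Finset.sum_le_sum hterm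
          _ = (N:ℝ) * (N:ℝ)^(p-1) := by
              rw [Finset.sum_const, Nat.card_Icc, Nat.add_sub_cancel, nsmul_eq_mul]
          _ = (N:ℝ)^p := by
              rw [show (N:ℝ) * (N:ℝ)^(p-1) = (N:ℝ)^(1:ℝ) * (N:ℝ)^(p-1) by rw [Real.rpow_one],
                ← Real.rpow_add hNR]
              norm_num
          _ ≤ (1 + p⁻¹) * (N:ℝ)^p := by
              have h1 : (0:ℝ) ≤ (N:ℝ)^p := Real.rpow_nonneg hNR.le _
              have h2 : (0:ℝ) < p⁻¹ := by positivity
              nlinarith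
      · -- p < 1 : induction
        have claim : ∀ M:ℕ, ∑ k ∈ Finset.Icc 1 M, (k:ℝ)^(2*c*lam-2) ≤ p⁻¹ * (M:ℝ)^p := by
          intro M
          induction M with
          | zero => simp [Real.zero_rpow (ne_of_gt hppos)]
          | succ n ih =>
            rw [Finset.sum_Icc_succ_top (by omega : 1 ≤ n + 1)]
            have hM : (0:ℝ) < (n:ℝ) + 1 := by positivity
            have hMn : ((n+1:ℕ):ℝ) = (n:ℝ)+1 := by push_cast; ring
            have hs : (-1:ℝ) ≤ -((n:ℝ)+1)⁻¹ := by
              have : ((n:ℝ)+1)⁻¹ ≤ 1 := by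
                apply inv_le_one_of_one_le₀; linarith [Nat.cast_nonneg (α := ℝ) n]
              linarith
            have hbern := rpow_one_add_le_one_add_mul_self hs hppos.le hP1.le
            have hmul := mul_le_mul_of_nonneg_right hbern
              (Real.rpow_nonneg hM.le p)
            have hl : (1 + -((n:ℝ)+1)⁻¹)^p * ((n:ℝ)+1)^p = (n:ℝ)^p := by
              rw [← Real.mul_rpow (by
                  have : ((n:ℝ)+1)⁻¹ ≤ 1 := by
                    apply inv_le_one_of_one_le₀; linarith [Nat.cast_nonneg (α := ℝ) n]
                  linarith) hM.le]
              congr 1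
              field_simp
              ring
            have hr : (1 + p * -((n:ℝ)+1)⁻¹) * ((n:ℝ)+1)^p
                = ((n:ℝ)+1)^p - p * ((n:ℝ)+1)^(p-1) := by
              rw [show ((n:ℝ)+1)^(p-1) = ((n:ℝ)+1)^p * ((n:ℝ)+1)⁻¹ by
                rw [Real.rpow_sub hM, Real.rpow_one, div_eq_mul_inv]]
              ring
            rw [hl, hr] at hmul
            have hkey : (n:ℝ)^p + p * ((n:ℝ)+1)^(p-1) ≤ ((n:ℝ)+1)^p := by linarith
            have hterm : (((n+1:ℕ)):ℝ)^(2*c*lam-2) = ((n:ℝ)+1)^(p-1) := by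
              rw [hMn, hexp]
            rw [hterm, hMn]
            have h4 := mul_le_mul_of_nonneg_left hkey (by positivity : (0:ℝ) ≤ p⁻¹)
            have hpp : p⁻¹ * p = 1 := inv_mul_cancel₀ (ne_of_gt hppos)
            have h5 : p⁻¹ * (p * ((n:ℝ)+1)^(p-1)) = ((n:ℝ)+1)^(p-1) := by
              rw [← mul_assoc, hpp, one_mul]
            nlinarith [ih, h4, h5]
        calc ∑ k ∈ Finset.Icc 1 N, (k:ℝ)^(2*c*lam-2) ≤ p⁻¹ * (N:ℝ)^p := claim N
          _ ≤ (1 + p⁻¹) * (N:ℝ)^p := by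
              have h1 : (0:ℝ) ≤ (N:ℝ)^p := Real.rpow_nonneg (Nat.cast_nonneg N) _
              nlinarith
    rw [isBigO_iff]
    refine ⟨Real.exp (2*H1^2*c^2) * ((c^2/CL) * (1 + p⁻¹)), ?_⟩
    filter_upwards [eventually_ge_atTop 1] with N hN
    have hNR : (0:ℝ) < N := by exact_mod_cast hN
    simp only [Real.norm_eq_abs]
    rw [abs_of_nonneg (mul_nonneg (hPpos N).le (hsumnn N)),
      abs_of_nonneg (by positivity : (0:ℝ) ≤ (N:ℝ)⁻¹)]
    have hs1 : ∑ k ∈ Finset.Icc 1 N, γ k ^ 2 / P k ≤ (c^2/CL) * ((1 + p⁻¹) * (N:ℝ)^p) := by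
      calc ∑ k ∈ Finset.Icc 1 N, γ k ^ 2 / P k
          ≤ ∑ k ∈ Finset.Icc 1 N, (c^2/CL) * (k:ℝ)^(2*c*lam-2) :=
            Finset.sum_le_sum (fun k hk => hB k (Finset.mem_Icc.mp hk).1)
        _ = (c^2/CL) * ∑ k ∈ Finset.Icc 1 N, (k:ℝ)^(2*c*lam-2) := (Finset.mul_sum _ _ _).symm
        _ ≤ (c^2/CL) * ((1 + p⁻¹) * (N:ℝ)^p) :=
            mul_le_mul_of_nonneg_left (hK N) (by positivity)
    have hmain : P N * ∑ k ∈ Finset.Icc 1 N, γ k ^ 2 / P k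
        ≤ (Real.exp (2*H1^2*c^2) * (N:ℝ)^(-(2*c*lam))) * ((c^2/CL) * ((1 + p⁻¹) * (N:ℝ)^p)) :=
      mul_le_mul (hub N hN) hs1 (hsumnn N) (by positivity)
    have hrw : (N:ℝ)^(-(2*c*lam)) * (N:ℝ)^p = (N:ℝ)⁻¹ := by
      rw [← Real.rpow_add hNR, hp, show -(2*c*lam) + (2*c*lam - 1) = (-1:ℝ) by ring,
        Real.rpow_neg_one]
    calc P N * ∑ k ∈ Finset.Icc 1 N, γ k ^ 2 / P k
        ≤ (Real.exp (2*H1^2*c^2) * (N:ℝ)^(-(2*c*lam))) * ((c^2/CL) * ((1 + p⁻¹) * (N:ℝ)^p)) :=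
          hmain
      _ = Real.exp (2*H1^2*c^2) * ((c^2/CL) * (1 + p⁻¹)) * ((N:ℝ)^(-(2*c*lam)) * (N:ℝ)^p) := by
          ring
      _ = Real.exp (2*H1^2*c^2) * ((c^2/CL) * (1 + p⁻¹)) * (N:ℝ)⁻¹ := by rw [hrw]
end

section
/- Let γ_n = c/n^ρ with c > 0 and 1/2 < ρ < 1, and Π_N = ∏_{k=1}^N (1 − 2λ̲γ_k + [H]₁²γ_k²) with λ̲ > 0. Then there exists C > 0 such that Π_N ≤ C exp(−2λ̲ c N^{1−ρ}/(1−ρ)) for all N ≥ 1, and for every ε ∈ (0, 1−ρ), Π_N ∑_{k=1}^N γ_k²/Π_k = o(N^{−ρ+ε}) as N → ∞. -/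
open Filter Asymptotics

private lemma telescope_Ioc (f : ℕ → ℝ) : ∀ M N : ℕ, M ≤ N →
    ∑ k ∈ Finset.Ioc M N, (f k - f (k - 1)) = f N - f M := by
  intro M N h
  induction N, h using Nat.le_induction with
  | base => simp
  | succ n hn ih =>
    rw [Finset.sum_Ioc_succ_top hn, ih]
    have : n + 1 - 1 = n := rfl
    rw [this]
    ring

set_option maxHeartbeats 1000000 in
/-- rates for polynomial steps `γ_n = c/n^ρ`, `1/2 < ρ < 1`. -/
theorem step_over_n_rho_rates
    (c lam H1 ρ : ℝ) (hc : 0 < c) (hlam : 0 < lam) (hH1 : 0 < H1)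
    (hρ1 : 1 / 2 < ρ) (hρ2 : ρ < 1)
    (γ : ℕ → ℝ) (hγ : ∀ n : ℕ, γ n = c / (n : ℝ) ^ ρ)
    (P : ℕ → ℝ)
    (hP : ∀ N, P N = ∏ k ∈ Finset.Icc 1 N, (1 - 2 * lam * γ k + H1 ^ 2 * γ k ^ 2))
    (hpos : ∀ k : ℕ, 1 ≤ k → 0 < 1 - 2 * lam * γ k + H1 ^ 2 * γ k ^ 2) :
    (∃ C : ℝ, 0 < C ∧ ∀ N : ℕ, 1 ≤ N →
      P N ≤ C * Real.exp (-2 * lam * c * (N : ℝ) ^ (1 - ρ) / (1 - ρ))) ∧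
    (∀ ε : ℝ, 0 < ε → ε < 1 - ρ →
      (fun N : ℕ => P N * ∑ k ∈ Finset.Icc 1 N, γ k ^ 2 / P k) =o[atTop]
        (fun N : ℕ => (N : ℝ) ^ (-ρ + ε))) := by
  have hρ0 : (0:ℝ) < ρ := by linarith
  have h1ρ : (0:ℝ) < 1 - ρ := by linarith
  have hIcc : ∀ N : ℕ, Finset.Icc 1 N = Finset.Ioc 0 N := by
    intro N; ext x; simp [Finset.mem_Icc, Finset.mem_Ioc]; omega
  have hgnn : ∀ k : ℕ, 0 ≤ γ k := by
    intro k; rw [hγ]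
    exact div_nonneg hc.le (Real.rpow_nonneg (Nat.cast_nonneg k) ρ)
  have hgpos : ∀ k : ℕ, 1 ≤ k → 0 < γ k := by
    intro k hk; rw [hγ]
    exact div_pos hc (Real.rpow_pos_of_pos (by exact_mod_cast hk) ρ)
  have hP' : ∀ N, P N = ∏ k ∈ Finset.Ioc 0 N, (1 - 2 * lam * γ k + H1 ^ 2 * γ k ^ 2) := by
    intro N; rw [hP, hIcc]
  have hPpos : ∀ N, 0 < P N := by
    intro N; rw [hP' N]
    exact Finset.prod_pos fun k hk => hpos k (Nat.succ_le_of_lt (Finset.mem_Ioc.mp hk).1)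
  have hPsucc : ∀ N : ℕ, P (N + 1) = P N * (1 - 2 * lam * γ (N+1) + H1 ^ 2 * γ (N+1) ^ 2) := by
    intro N; rw [hP', hP', Finset.prod_Ioc_succ_top (Nat.zero_le _)]
  -- summability of γ² and the bound K
  have hsummable : Summable (fun k : ℕ => c ^ 2 * (k : ℝ) ^ (-(2 * ρ))) :=
    (Real.summable_nat_rpow.mpr (by linarith)).mul_left _
  set K : ℝ := ∑' k : ℕ, c ^ 2 * (k : ℝ) ^ (-(2 * ρ)) with hKdef
  have hgsq : ∀ k : ℕ, γ k ^ 2 = c ^ 2 * (k : ℝ) ^ (-(2 * ρ)) := by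
    intro k
    rw [hγ, div_pow, ← Real.rpow_natCast ((k:ℝ) ^ ρ) 2, ← Real.rpow_mul (Nat.cast_nonneg k),
      Real.rpow_neg (Nat.cast_nonneg k), div_eq_mul_inv]
    norm_num [mul_comm ρ 2]
  have hK : ∀ s : Finset ℕ, ∑ k ∈ s, γ k ^ 2 ≤ K := by
    intro s
    calc ∑ k ∈ s, γ k ^ 2 = ∑ k ∈ s, c ^ 2 * (k : ℝ) ^ (-(2 * ρ)) :=
          Finset.sum_congr rfl fun k _ => hgsq k
      _ ≤ K := Summable.sum_le_tsum s
          (fun k _ => mul_nonneg (sq_nonneg c) (Real.rpow_nonneg (Nat.cast_nonneg k) _))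
          hsummable
  have hK0 : 0 ≤ K :=
    tsum_nonneg fun k => mul_nonneg (sq_nonneg c) (Real.rpow_nonneg (Nat.cast_nonneg k) _)
  -- core product-ratio bound
  have hratio : ∀ M N : ℕ, M ≤ N →
      P N ≤ P M * Real.exp (H1 ^ 2 * K - 2 * lam * ∑ k ∈ Finset.Ioc M N, γ k) := by
    intro M N hMN
    rw [hP' N, ← Finset.prod_Ioc_consecutive _ (Nat.zero_le M) hMN, ← hP' M]
    refine mul_le_mul_of_nonneg_left ?_ (hPpos M).le
    calc ∏ k ∈ Finset.Ioc M N, (1 - 2 * lam * γ k + H1 ^ 2 * γ k ^ 2)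
        ≤ ∏ k ∈ Finset.Ioc M N, Real.exp (-(2 * lam * γ k) + H1 ^ 2 * γ k ^ 2) := by
          refine Finset.prod_le_prod (fun k hk => (hpos k (by have := (Finset.mem_Ioc.mp hk).1; omega)).le)
            (fun k hk => ?_)
          have := Real.add_one_le_exp (-(2 * lam * γ k) + H1 ^ 2 * γ k ^ 2)
          linarith
      _ = Real.exp (∑ k ∈ Finset.Ioc M N, (-(2 * lam * γ k) + H1 ^ 2 * γ k ^ 2)) :=
          (Real.exp_sum _ _).symm
      _ ≤ Real.exp (H1 ^ 2 * K - 2 * lam * ∑ k ∈ Finset.Ioc M N, γ k) := by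
          apply Real.exp_le_exp.mpr
          rw [Finset.sum_add_distrib, Finset.sum_neg_distrib, ← Finset.mul_sum, ← Finset.mul_sum]
          have := hK (Finset.Ioc M N)
          nlinarith [sq_nonneg H1]
  -- lower bound on Γ_N via integral comparison
  have hΓlb : ∀ N : ℕ, c * ((N : ℝ) ^ (1 - ρ) - 1) / (1 - ρ) ≤ ∑ k ∈ Finset.Ioc 0 N, γ k := by
    intro N
    have hsum : ∑ k ∈ Finset.Ioc 0 N, γ k = ∑ i ∈ Finset.range N, c * ((1 : ℝ) + i) ^ (-ρ) := by
      rw [← hIcc, ← Finset.Ico_add_one_right_eq_Icc, Finset.sum_Ico_eq_sum_range]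
      refine Finset.sum_congr (by norm_num) fun i _ => ?_
      rw [hγ, Real.rpow_neg (by positivity), div_eq_mul_inv]
      push_cast
      ring_nf
    have hanti : AntitoneOn (fun x : ℝ => c * x ^ (-ρ)) (Set.Icc 1 (1 + (N:ℕ))) := by
      intro x hx y hy hxy
      exact mul_le_mul_of_nonneg_left
        (Real.rpow_le_rpow_of_nonpos (lt_of_lt_of_le one_pos hx.1) hxy (neg_nonpos.mpr hρ0.le))
        hc.le
    have hint := hanti.integral_le_sum
    rw [hsum]
    refine le_trans ?_ hint
    rw [intervalIntegral.integral_const_mul, integral_rpow (Or.inl (by linarith)),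
      Real.one_rpow]
    have h1 : (N : ℝ) ^ (1 - ρ) ≤ (1 + (N:ℝ)) ^ (1 - ρ) :=
      Real.rpow_le_rpow (Nat.cast_nonneg N) (by linarith) h1ρ.le
    have h2 : -ρ + 1 = 1 - ρ := by ring
    rw [h2, mul_div_assoc]
    gcongr
  constructor
  · -- Part 1
    refine ⟨Real.exp (H1 ^ 2 * K + 2 * lam * c / (1 - ρ)), Real.exp_pos _, fun N hN => ?_⟩
    have h := hratio 0 N (Nat.zero_le N)
    have hP0 : P 0 = 1 := by rw [hP]; simp
    rw [hP0, one_mul] at h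
    refine h.trans ?_
    rw [← Real.exp_add]
    apply Real.exp_le_exp.mpr
    have hg := hΓlb N
    have hmul := mul_le_mul_of_nonneg_left hg (by positivity : (0:ℝ) ≤ 2 * lam)
    have heq : H1 ^ 2 * K - 2 * lam * (c * ((N : ℝ) ^ (1 - ρ) - 1) / (1 - ρ)) =
        H1 ^ 2 * K + 2 * lam * c / (1 - ρ) + -2 * lam * c * (N : ℝ) ^ (1 - ρ) / (1 - ρ) := by
      field_simp
      ring
    linarith
  · -- Part 2
    intro ε hε1 hε2
    -- threshold k₁ with H1² γ_k ≤ lam for k ≥ k₁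
    have htendρ : Tendsto (fun k : ℕ => (k : ℝ) ^ ρ) atTop atTop :=
      (tendsto_rpow_atTop hρ0).comp tendsto_natCast_atTop_atTop
    obtain ⟨k₀, hk₀⟩ := (htendρ.eventually_ge_atTop (H1 ^ 2 * c / lam)).exists_forall_of_atTop
    set k₁ : ℕ := max k₀ 1 with hk₁def
    have hk₁1 : 1 ≤ k₁ := le_max_right _ _
    have hsmall : ∀ k : ℕ, k₁ ≤ k → H1 ^ 2 * γ k ≤ lam := by
      intro k hk
      have hk1 : 1 ≤ k := le_trans hk₁1 hk
      have hbig := hk₀ k (le_trans (le_max_left _ _) hk)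
      have hkpos : (0:ℝ) < (k : ℝ) ^ ρ := Real.rpow_pos_of_pos (by exact_mod_cast hk1) ρ
      rw [div_le_iff₀ hlam] at hbig
      rw [hγ, ← mul_div_assoc, div_le_iff₀ hkpos]
      linarith
    -- little-o comparison of the two power scales
    have hlo : (fun N : ℕ => (N : ℝ) ^ (-ρ)) =o[atTop] (fun N : ℕ => (N : ℝ) ^ (-ρ + ε)) := by
      rw [isLittleO_iff_tendsto']
      · refine Tendsto.congr' ?_
          ((tendsto_rpow_neg_atTop hε1).comp tendsto_natCast_atTop_atTop)
        filter_upwards [eventually_ge_atTop 1] with N hN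
        have hNpos : (0:ℝ) < (N:ℝ) := by exact_mod_cast hN
        simp only [Function.comp_apply]
        rw [← Real.rpow_sub hNpos]
        congr 1
        ring
      · filter_upwards [eventually_ge_atTop 1] with N hN h0
        have hNpos : (0:ℝ) < (N:ℝ) := by exact_mod_cast hN
        exact absurd h0 (ne_of_gt (Real.rpow_pos_of_pos hNpos _))
    -- exponential domination eventuality
    have htend2 : Tendsto (fun N : ℕ => (N : ℝ) ^ ρ * Real.exp (-(lam * c) * (N : ℝ) ^ (1 - ρ)))
        atTop (nhds 0) := by
      have hcomp := (tendsto_rpow_mul_exp_neg_mul_atTop_nhds_zero (ρ / (1 - ρ)) (lam * c)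
        (by positivity)).comp ((tendsto_rpow_atTop h1ρ).comp tendsto_natCast_atTop_atTop)
      refine hcomp.congr fun N => ?_
      simp only [Function.comp_apply]
      rw [← Real.rpow_mul (Nat.cast_nonneg N)]
      have he : (1 - ρ) * (ρ / (1 - ρ)) = ρ := by field_simp
      rw [he]
    have hexpev : ∀ᶠ N : ℕ in atTop,
        (N : ℝ) ^ ρ * Real.exp (-(lam * c) * (N : ℝ) ^ (1 - ρ)) ≤ 1 :=
      htend2.eventually (eventually_le_nhds (by norm_num : (0:ℝ) < 1))
    -- the big-O bound by N^(-ρ)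
    have hbig : (fun N : ℕ => P N * ∑ k ∈ Finset.Icc 1 N, γ k ^ 2 / P k) =O[atTop]
        (fun N : ℕ => (N : ℝ) ^ (-ρ)) := by
      rw [isBigO_iff]
      refine ⟨K * Real.exp (2 * (H1 ^ 2 * K)) + c * 2 ^ ρ / lam, ?_⟩
      filter_upwards [eventually_ge_atTop (2 * k₁ + 2), hexpev] with N hNge hexp
      set M : ℕ := N / 2 with hMdef
      have hN1 : 1 ≤ N := by omega
      have hMN : M ≤ N := Nat.div_le_self N 2
      have hM1 : 1 ≤ M := by omega
      have hMk : k₁ ≤ M := by omega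
      have hNR : (0:ℝ) < (N:ℝ) := by exact_mod_cast hN1
      have hNrpos : (0:ℝ) < (N:ℝ) ^ (-ρ) := Real.rpow_pos_of_pos hNR _
      have hMreal : (N:ℝ) / 2 ≤ (M:ℝ) + 1 := by
        have h2 : N ≤ 2 * M + 2 := by omega
        have h3 := (Nat.cast_le (α := ℝ)).mpr h2
        push_cast at h3
        linarith
      have hMreal2 : (M:ℝ) ≤ (N:ℝ) / 2 := by
        have h2 : 2 * M ≤ N := by omega
        have h3 := (Nat.cast_le (α := ℝ)).mpr h2
        push_cast at h3
        linarith
      set D : ℝ := c * 2 ^ ρ * (N:ℝ) ^ (-ρ) / lam with hD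
      have hD0 : 0 ≤ D := div_nonneg (mul_nonneg (mul_nonneg hc.le (Real.rpow_nonneg (by norm_num) ρ)) hNrpos.le) hlam.le
      -- tail: per-term bound via telescoping differences
      have hterm : ∀ k ∈ Finset.Ioc M N, γ k ^ 2 / P k ≤ D * ((P k)⁻¹ - (P (k-1))⁻¹) := by
        intro k hk
        obtain ⟨hk1, hk2⟩ := Finset.mem_Ioc.mp hk
        have hk1' : 1 ≤ k := by omega
        have hkk₁ : k₁ ≤ k := by omega
        have hkR : (N:ℝ)/2 ≤ (k:ℝ) := by
          have h4 : (M:ℝ) + 1 ≤ (k:ℝ) := by exact_mod_cast hk1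
          linarith
        have h2pos : (0:ℝ) < (N:ℝ)/2 := by linarith
        have hgk : γ k ≤ c * 2 ^ ρ * (N:ℝ) ^ (-ρ) := by
          rw [hγ]
          have hmono : ((N:ℝ)/2) ^ ρ ≤ (k:ℝ) ^ ρ := Real.rpow_le_rpow h2pos.le hkR hρ0.le
          have hNo : ((N:ℝ)/2) ^ ρ = (N:ℝ)^ρ / 2^ρ := Real.div_rpow hNR.le (by norm_num : (0:ℝ) ≤ 2) ρ
          have hstep : c / (k:ℝ)^ρ ≤ c / ((N:ℝ)/2)^ρ :=
            div_le_div_of_nonneg_left hc.le (Real.rpow_pos_of_pos h2pos ρ) hmono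
          refine hstep.trans (le_of_eq ?_)
          rw [hNo, Real.rpow_neg hNR.le]
          have hNρ : (0:ℝ) < (N:ℝ)^ρ := Real.rpow_pos_of_pos hNR ρ
          field_simp
        have hPk := hPsucc (k-1)
        rw [(by omega : k - 1 + 1 = k)] at hPk
        have hPkpos := hPpos k
        have hPk1pos := hPpos (k-1)
        have hapos := hpos k hk1'
        have hinv : (P k)⁻¹ - (P (k-1))⁻¹ = (2*lam*γ k - H1^2*γ k^2) / P k := by
          rw [hPk]
          simp only [div_eq_mul_inv, mul_inv]
          have ha := mul_inv_cancel₀ hapos.ne'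
          linear_combination (P (k-1))⁻¹ * ha
        have hsm := hsmall k hkk₁
        have h1 : lam * γ k ≤ 2*lam*γ k - H1^2*γ k^2 := by nlinarith [hgnn k]
        rw [hinv, mul_div_assoc']
        gcongr
        have hDγ : γ k / lam ≤ D := by rw [hD]; exact (div_le_div_iff_of_pos_right hlam).mpr hgk
        have e1 : γ k ^ 2 = γ k / lam * (lam * γ k) := by field_simp
        have hmm : γ k / lam * (lam * γ k) ≤ D * (2*lam*γ k - H1^2*γ k^2) :=
          mul_le_mul hDγ h1 (mul_nonneg hlam.le (hgnn k)) hD0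
        linarith [e1]
      have htail : ∑ k ∈ Finset.Ioc M N, γ k ^ 2 / P k ≤ D * (P N)⁻¹ := by
        calc ∑ k ∈ Finset.Ioc M N, γ k ^ 2 / P k
            ≤ ∑ k ∈ Finset.Ioc M N, D * ((P k)⁻¹ - (P (k-1))⁻¹) := Finset.sum_le_sum hterm
          _ = D * ((P N)⁻¹ - (P M)⁻¹) := by
              rw [← Finset.mul_sum, telescope_Ioc (fun k => (P k)⁻¹) M N hMN]
          _ ≤ D * (P N)⁻¹ := by
              have hPMi : 0 ≤ (P M)⁻¹ := inv_nonneg.mpr (hPpos M).le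
              nlinarith
      -- head
      have hheadterm : ∀ k ∈ Finset.Ioc 0 M,
          γ k ^ 2 / P k ≤ γ k ^ 2 * (Real.exp (H1^2*K) * (P M)⁻¹) := by
        intro k hk
        obtain ⟨hk0, hkM⟩ := Finset.mem_Ioc.mp hk
        have h := hratio k M hkM
        have h2 : P M ≤ P k * Real.exp (H1^2*K) := by
          refine h.trans (mul_le_mul_of_nonneg_left ?_ (hPpos k).le)
          apply Real.exp_le_exp.mpr
          have hnn : 0 ≤ ∑ j ∈ Finset.Ioc k M, γ j := Finset.sum_nonneg fun j _ => hgnn j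
          nlinarith
        have hinvle : (P k)⁻¹ ≤ Real.exp (H1^2*K) * (P M)⁻¹ := by
          rw [inv_eq_one_div, inv_eq_one_div, mul_one_div, div_le_div_iff₀ (hPpos k) (hPpos M)]
          linarith
        rw [div_eq_mul_inv]
        exact mul_le_mul_of_nonneg_left hinvle (sq_nonneg _)
      have hhead : ∑ k ∈ Finset.Ioc 0 M, γ k ^ 2 / P k
          ≤ K * (Real.exp (H1^2*K) * (P M)⁻¹) := by
        calc ∑ k ∈ Finset.Ioc 0 M, γ k ^ 2 / P k
            ≤ ∑ k ∈ Finset.Ioc 0 M, γ k ^ 2 * (Real.exp (H1^2*K) * (P M)⁻¹) :=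
              Finset.sum_le_sum hheadterm
          _ = (∑ k ∈ Finset.Ioc 0 M, γ k ^ 2) * (Real.exp (H1^2*K) * (P M)⁻¹) := by
              rw [← Finset.sum_mul]
          _ ≤ K * (Real.exp (H1^2*K) * (P M)⁻¹) := by
              exact mul_le_mul_of_nonneg_right (hK _)
                (mul_nonneg (Real.exp_pos _).le (inv_nonneg.mpr (hPpos M).le))
      -- lower bound on the tail sum of γ's
      have hgamma_lb : (c/2) * (N:ℝ)^(1-ρ) ≤ ∑ k ∈ Finset.Ioc M N, γ k := by
        have hcard : (Finset.Ioc M N).card = N - M := Nat.card_Ioc M N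
        have hlb : ∀ k ∈ Finset.Ioc M N, c * (N:ℝ)^(-ρ) ≤ γ k := by
          intro k hk
          obtain ⟨hk0, hkN⟩ := Finset.mem_Ioc.mp hk
          have hk1 : (0:ℝ) < (k:ℝ) := by exact_mod_cast (by omega : 0 < k)
          rw [hγ, Real.rpow_neg hNR.le, ← div_eq_mul_inv]
          exact div_le_div_of_nonneg_left hc.le (Real.rpow_pos_of_pos hk1 ρ)
            (Real.rpow_le_rpow hk1.le (by exact_mod_cast hkN) hρ0.le)
        have hsumlb := Finset.card_nsmul_le_sum (Finset.Ioc M N) _ _ hlb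
        rw [hcard, nsmul_eq_mul, Nat.cast_sub hMN] at hsumlb
        refine le_trans ?_ hsumlb
        have hNM : (N:ℝ)/2 ≤ (N:ℝ) - (M:ℝ) := by linarith
        have hid : (N:ℝ) * (N:ℝ)^(-ρ) = (N:ℝ)^(1-ρ) := by
          rw [show (1:ℝ)-ρ = 1 + (-ρ) by ring, Real.rpow_add hNR, Real.rpow_one]
        have hmul := mul_le_mul_of_nonneg_right hNM (mul_nonneg hc.le hNrpos.le)
        rw [← hid]
        nlinarith
      -- assemble
      have hPN := hPpos N
      have hPM := hPpos M
      have hsplit : ∑ k ∈ Finset.Icc 1 N, γ k ^ 2 / P k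
          = ∑ k ∈ Finset.Ioc 0 M, γ k ^ 2 / P k + ∑ k ∈ Finset.Ioc M N, γ k ^ 2 / P k := by
        rw [hIcc, ← Finset.sum_Ioc_consecutive _ (Nat.zero_le M) hMN]
      have hPNtail : P N * ∑ k ∈ Finset.Ioc M N, γ k ^ 2 / P k ≤ c * 2^ρ/lam * (N:ℝ)^(-ρ) := by
        calc P N * ∑ k ∈ Finset.Ioc M N, γ k ^ 2 / P k ≤ P N * (D * (P N)⁻¹) :=
              mul_le_mul_of_nonneg_left htail hPN.le
          _ = D := by field_simp
          _ = c * 2^ρ/lam * (N:ℝ)^(-ρ) := by rw [hD]; ring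
      have hexp' : Real.exp (-(lam*c)*(N:ℝ)^(1-ρ)) ≤ (N:ℝ)^(-ρ) := by
        have hcancel : (N:ℝ)^(-ρ) * (N:ℝ)^ρ = 1 := by
          rw [← Real.rpow_add hNR]; norm_num
        calc Real.exp (-(lam*c)*(N:ℝ)^(1-ρ))
            = (N:ℝ)^(-ρ) * ((N:ℝ)^ρ * Real.exp (-(lam*c)*(N:ℝ)^(1-ρ))) := by
              rw [← mul_assoc, hcancel, one_mul]
          _ ≤ (N:ℝ)^(-ρ) * 1 := mul_le_mul_of_nonneg_left hexp hNrpos.le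
          _ = (N:ℝ)^(-ρ) := mul_one _
      have h2 : P N * (P M)⁻¹ ≤ Real.exp (H1^2*K) * Real.exp (-(lam*c)*(N:ℝ)^(1-ρ)) := by
        rw [← Real.exp_add]
        have hstep : P N ≤ P M * Real.exp (H1^2*K + -(lam*c)*(N:ℝ)^(1-ρ)) := by
          refine (hratio M N hMN).trans (mul_le_mul_of_nonneg_left ?_ hPM.le)
          apply Real.exp_le_exp.mpr
          nlinarith [hgamma_lb]
        calc P N * (P M)⁻¹
            ≤ (P M * Real.exp (H1^2*K + -(lam*c)*(N:ℝ)^(1-ρ))) * (P M)⁻¹ :=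
              mul_le_mul_of_nonneg_right hstep (inv_nonneg.mpr hPM.le)
          _ = Real.exp (H1^2*K + -(lam*c)*(N:ℝ)^(1-ρ)) := by field_simp
      have hPNhead : P N * ∑ k ∈ Finset.Ioc 0 M, γ k ^ 2 / P k
          ≤ K * Real.exp (2*(H1^2*K)) * (N:ℝ)^(-ρ) := by
        have hE2 : Real.exp (H1^2*K) * Real.exp (H1^2*K) = Real.exp (2*(H1^2*K)) := by
          rw [← Real.exp_add]; ring_nf
        calc P N * ∑ k ∈ Finset.Ioc 0 M, γ k ^ 2 / P k
            ≤ P N * (K * (Real.exp (H1^2*K) * (P M)⁻¹)) :=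
              mul_le_mul_of_nonneg_left hhead hPN.le
          _ = (P N * (P M)⁻¹) * (K * Real.exp (H1^2*K)) := by ring
          _ ≤ (Real.exp (H1^2*K) * Real.exp (-(lam*c)*(N:ℝ)^(1-ρ))) * (K * Real.exp (H1^2*K)) :=
              mul_le_mul_of_nonneg_right h2 (mul_nonneg hK0 (Real.exp_pos _).le)
          _ = K * (Real.exp (H1^2*K) * Real.exp (H1^2*K)) * Real.exp (-(lam*c)*(N:ℝ)^(1-ρ)) := by
              ring
          _ = K * Real.exp (2*(H1^2*K)) * Real.exp (-(lam*c)*(N:ℝ)^(1-ρ)) := by rw [hE2]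
          _ ≤ K * Real.exp (2*(H1^2*K)) * (N:ℝ)^(-ρ) :=
              mul_le_mul_of_nonneg_left hexp' (mul_nonneg hK0 (Real.exp_pos _).le)
      have hsnn : 0 ≤ ∑ k ∈ Finset.Icc 1 N, γ k ^ 2 / P k :=
        Finset.sum_nonneg fun k _ => div_nonneg (sq_nonneg _) (hPpos k).le
      rw [Real.norm_eq_abs, Real.norm_eq_abs, abs_of_nonneg (mul_nonneg hPN.le hsnn),
        abs_of_nonneg hNrpos.le, hsplit, mul_add, add_mul]
      exact add_le_add hPNhead hPNtail
    exact hbig.trans_isLittleO hlo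
end
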